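/- arXiv:2202.09215 — 6 statements merged into one kernel-verified Lean document; each statement's English description precedes it below -/
import Mathlib

section
/- Let φ = (1+√5)/2. Then A_1 ≥ φ⁻¹ · W_1. In words: for every arrival order, the adaptive order-unaware threshold algorithm obtains an expected value of at least the inverse golden ratio times the expected value of the optimal order-aware online algorithm (Theorem 3.1, Main Result 1). -/
open MeasureTheory ProbabilityTheory

lemma gr_abs_max_le (a b : ℝ) : |max a b| ≤ |a| + |b| := by
  rcases le_total a b with h | h
  · rw [max_eq_right h]; nlinarith [abs_nonneg a]
  · rw [max_eq_left h]; nlinarith [abs_nonneg b]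

lemma gr_int_max {Ω : Type*} [MeasurableSpace Ω] {μ : Measure Ω}
    {f g : Ω → ℝ} (hfm : Measurable f) (hgm : Measurable g)
    (hf : Integrable f μ) (hg : Integrable g μ) :
    Integrable (fun ω => max (f ω) (g ω)) μ := by
  refine (hf.abs.add hg.abs).mono' ((hfm.max hgm).aestronglyMeasurable)
    (Filter.Eventually.of_forall fun ω => ?_)
  simpa [Real.norm_eq_abs] using gr_abs_max_le (f ω) (g ω)

/-- Fubini-type identity for a pair of independent random variables. -/
lemma gr_key_indep {Ω : Type*} [MeasurableSpace Ω] (μ : Measure Ω) [IsProbabilityMeasure μ]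
    {X Y : Ω → ℝ} (hX : Measurable X) (hY : Measurable Y)
    (hXi : Integrable X μ) (hYi : Integrable Y μ)
    (hind : IndepFun X Y μ) (F : ℝ → ℝ → ℝ) (hF : Measurable (Function.uncurry F))
    (hFb : ∀ x y, |F x y| ≤ |x| + |y|) :
    (∫ ω, F (X ω) (Y ω) ∂μ = ∫ ω, (∫ ω', F (X ω) (Y ω') ∂μ) ∂μ) ∧
      Integrable (fun ω => ∫ ω', F (X ω) (Y ω') ∂μ) μ := by
  haveI : IsProbabilityMeasure (μ.map X) := Measure.isProbabilityMeasure_map hX.aemeasurable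
  haveI : IsProbabilityMeasure (μ.map Y) := Measure.isProbabilityMeasure_map hY.aemeasurable
  have hmap : μ.map (fun ω => (X ω, Y ω)) = (μ.map X).prod (μ.map Y) :=
    (indepFun_iff_map_prod_eq_prod_map_map hX.aemeasurable hY.aemeasurable).mp hind
  have hpm : Measurable (fun ω => (X ω, Y ω)) := hX.prodMk hY
  have hcomp_meas : Measurable (fun ω => F (X ω) (Y ω)) := hF.comp hpm
  have hcomp_int : Integrable (fun ω => F (X ω) (Y ω)) μ := by
    refine (hXi.abs.add hYi.abs).mono' hcomp_meas.aestronglyMeasurable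
      (Filter.Eventually.of_forall fun ω => ?_)
    simpa [Real.norm_eq_abs] using hFb (X ω) (Y ω)
  have hprod_int : Integrable (Function.uncurry F) ((μ.map X).prod (μ.map Y)) := by
    rw [← hmap, integrable_map_measure hF.aestronglyMeasurable hpm.aemeasurable]
    exact hcomp_int
  have hinner : ∀ x : ℝ, ∫ b, F x b ∂(μ.map Y) = ∫ ω', F x (Y ω') ∂μ := fun x =>
    integral_map hY.aemeasurable
      ((hF.comp (measurable_const.prodMk measurable_id)).aestronglyMeasurable)
  have hgm : StronglyMeasurable (fun x => ∫ b, Function.uncurry F (x, b) ∂(μ.map Y)) :=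
    hF.stronglyMeasurable.integral_prod_right'
  have hgm' : StronglyMeasurable (fun x => ∫ ω', F x (Y ω') ∂μ) := by
    have he : (fun x => ∫ b, Function.uncurry F (x, b) ∂(μ.map Y))
        = fun x => ∫ ω', F x (Y ω') ∂μ := funext hinner
    rwa [he] at hgm
  have hgint : Integrable (fun x => ∫ b, Function.uncurry F (x, b) ∂(μ.map Y)) (μ.map X) :=
    hprod_int.integral_prod_left
  have hgint' : Integrable (fun x => ∫ ω', F x (Y ω') ∂μ) (μ.map X) := by
    have he : (fun x => ∫ b, Function.uncurry F (x, b) ∂(μ.map Y))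
        = fun x => ∫ ω', F x (Y ω') ∂μ := funext hinner
    rwa [he] at hgint
  constructor
  · calc ∫ ω, F (X ω) (Y ω) ∂μ
        = ∫ p, Function.uncurry F p ∂(μ.map (fun ω => (X ω, Y ω))) :=
          (integral_map hpm.aemeasurable hF.aestronglyMeasurable).symm
      _ = ∫ p, Function.uncurry F p ∂((μ.map X).prod (μ.map Y)) := by rw [hmap]
      _ = ∫ a, (∫ b, Function.uncurry F (a, b) ∂(μ.map Y)) ∂(μ.map X) :=
          integral_prod _ hprod_int
      _ = ∫ a, (∫ ω', F a (Y ω') ∂μ) ∂(μ.map X) :=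
          integral_congr_ae (Filter.Eventually.of_forall hinner)
      _ = ∫ ω, (∫ ω', F (X ω) (Y ω') ∂μ) ∂μ :=
          integral_map hX.aemeasurable hgm'.aestronglyMeasurable
  · exact (integrable_map_measure hgm'.aestronglyMeasurable hX.aemeasurable).mp hgint'

set_option maxHeartbeats 3200000 in
/-- Theorem 3.1 (Main Result 1). Boxes are 0-indexed: `v 0, …, v (n-1)` are
independent, nonnegative, integrable random variables.
`y t ω = max_{s > t} v s ω` (the empty supremum in `ℝ` is `0`, so `y` of the
last box is `0`), `α t = φ⁻¹·E[y t]`, `β t ≥ 0` solves `E[(y t − φ·x)⁺] = x`,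
and `τ t = max (α t) (β t)`. The order-unaware algorithm's value satisfies
`A n = 0` and `A t = E[v t · 1{v t ≥ τ t}] + Pr[v t < τ t] · A (t+1)`;
the optimal order-aware value satisfies `W n = 0` and
`W t = E[max (v t) (W (t+1))]`. Then `A 1 ≥ φ⁻¹ · W 1`, i.e. (0-indexed)
`A 0 ≥ φ⁻¹ · W 0`, where `φ = (1+√5)/2` is the golden ratio. -/
theorem order_unaware_golden_ratio {Ω : Type*} [MeasurableSpace Ω]
    (μ : Measure Ω) [IsProbabilityMeasure μ]
    (n : ℕ) (hn : 1 ≤ n)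
    (v : Fin n → Ω → ℝ)
    (hmeas : ∀ t, Measurable (v t))
    (hnonneg : ∀ t ω, 0 ≤ v t ω)
    (hint : ∀ t, Integrable (v t) μ)
    (hindep : iIndepFun v μ)
    (φ : ℝ) (hφ : φ = (1 + Real.sqrt 5) / 2)
    (y : Fin n → Ω → ℝ)
    (hy : ∀ t ω, y t ω = ⨆ s : {s : Fin n // t < s}, v s ω)
    (α β τ : Fin n → ℝ)
    (hα : ∀ t, α t = φ⁻¹ * ∫ ω, y t ω ∂μ)
    (hβ0 : ∀ t, 0 ≤ β t)
    (hβ : ∀ t, (∫ ω, max (y t ω - φ * β t) 0 ∂μ) = β t)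
    (hτ : ∀ t, τ t = max (α t) (β t))
    (A W : ℕ → ℝ)
    (hAn : A n = 0)
    (hA : ∀ t : Fin n, A t =
      (∫ ω, (if τ t ≤ v t ω then v t ω else 0) ∂μ)
        + (μ {ω | v t ω < τ t}).toReal * A ((t : ℕ) + 1))
    (hWn : W n = 0)
    (hW : ∀ t : Fin n, W t = ∫ ω, max (v t ω) (W ((t : ℕ) + 1)) ∂μ) :
    A 0 ≥ φ⁻¹ * W 0 := by
  have hy_bdd : ∀ (t : Fin n) (ω : Ω),
      BddAbove (Set.range fun s : {s : Fin n // t < s} => v s ω) :=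
    fun t ω => Set.Finite.bddAbove (Set.finite_range _)
  have hy_nonneg : ∀ t ω, 0 ≤ y t ω := fun t ω => by
    rw [hy]; exact Real.iSup_nonneg fun s => hnonneg s ω
  have hy_last : ∀ t : Fin n, (t : ℕ) + 1 = n → ∀ ω, y t ω = 0 := by
    intro t ht ω
    haveI : IsEmpty {s : Fin n // t < s} := ⟨fun s => by
      have h1 : (t : ℕ) < (s.1 : ℕ) := s.2
      have h2 : ((s.1 : ℕ)) < n := s.1.isLt
      omega⟩
    rw [hy]; exact Real.iSup_of_isEmpty _
  have hy_step : ∀ (t t' : Fin n), (t' : ℕ) = (t : ℕ) + 1 →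
      ∀ ω, y t ω = max (v t' ω) (y t' ω) := by
    intro t t' ht ω
    have htt' : t < t' := by rw [Fin.lt_def]; omega
    haveI : Nonempty {s : Fin n // t < s} := ⟨⟨t', htt'⟩⟩
    rw [hy t, hy t']
    apply le_antisymm
    · refine ciSup_le fun s => ?_
      rcases eq_or_ne s.1 t' with h | h
      · rw [h]; exact le_max_left _ _
      · have h2 : t' < s.1 := by
          rw [Fin.lt_def]
          have h3 : (t : ℕ) < (s.1 : ℕ) := s.2
          have h4 : (s.1 : ℕ) ≠ (t' : ℕ) := fun hc => h (Fin.ext hc)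
          omega
        exact le_trans (le_ciSup (hy_bdd t' ω) ⟨s.1, h2⟩) (le_max_right _ _)
    · refine max_le (le_ciSup (hy_bdd t ω) ⟨t', htt'⟩) ?_
      rcases isEmpty_or_nonempty {u : Fin n // t' < u} with he | hne
      · rw [Real.iSup_of_isEmpty]
        exact Real.iSup_nonneg fun s => hnonneg _ ω
      · exact ciSup_le fun u => le_ciSup (hy_bdd t ω) ⟨u.1, lt_trans htt' u.2⟩
  have hy_indep : ∀ t : Fin n, IndepFun (v t) (y t) μ := by
    intro t
    classical
    set T : Finset (Fin n) := Finset.univ.filter (fun s => t < s) with hT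
    have hdisj : Disjoint ({t} : Finset (Fin n)) T := by
      simp [Finset.disjoint_left, hT]
    have hfin := hindep.indepFun_finset {t} T hdisj hmeas
    have hg1 : Measurable (fun u : {x : Fin n // x ∈ ({t} : Finset (Fin n))} → ℝ =>
        u ⟨t, Finset.mem_singleton_self t⟩) := measurable_pi_apply _
    have hg2 : Measurable (fun u : {x : Fin n // x ∈ T} → ℝ =>
        ⨆ s : {s : Fin n // t < s},
          u ⟨s.1, Finset.mem_filter.mpr ⟨Finset.mem_univ _, s.2⟩⟩) :=
      Measurable.iSup (fun s => measurable_pi_apply _)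
    have h' := hfin.comp hg1 hg2
    have h'' : IndepFun (fun a => v t a)
        (fun a => ⨆ s : {s : Fin n // t < s}, v s.1 a) μ := h'
    have e2 : (fun a => ⨆ s : {s : Fin n // t < s}, v s.1 a) = y t :=
      funext fun ω => (hy t ω).symm
    rwa [e2] at h''
  -- measurability and integrability of y
  have hy_mi : ∀ (k : ℕ) (t : Fin n), n ≤ (t : ℕ) + 1 + k →
      Measurable (y t) ∧ Integrable (y t) μ := by
    intro k
    induction k with
    | zero =>
      intro t ht
      have hlast : (t : ℕ) + 1 = n := by have := t.isLt; omega
      have he : y t = fun _ => 0 := funext (hy_last t hlast)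
      rw [he]; exact ⟨measurable_const, integrable_const 0⟩
    | succ k ihk =>
      intro t ht
      by_cases h : (t : ℕ) + 1 = n
      · have he : y t = fun _ => 0 := funext (hy_last t h)
        rw [he]; exact ⟨measurable_const, integrable_const 0⟩
      · have hlt : (t : ℕ) + 1 < n := by have := t.isLt; omega
        have ih' := ihk ⟨(t : ℕ) + 1, hlt⟩ (by simp; omega)
        have he : y t = fun ω => max (v ⟨(t : ℕ) + 1, hlt⟩ ω) (y ⟨(t : ℕ) + 1, hlt⟩ ω) :=
          funext (hy_step t ⟨(t : ℕ) + 1, hlt⟩ rfl)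
        rw [he]
        exact ⟨(hmeas _).max ih'.1, gr_int_max (hmeas _) ih'.1 (hint _) ih'.2⟩
  have hy_meas : ∀ t, Measurable (y t) := fun t => (hy_mi n t (by omega)).1
  have hy_int : ∀ t, Integrable (y t) μ := fun t => (hy_mi n t (by omega)).2
  have keyY : ∀ (t : Fin n) (F : ℝ → ℝ → ℝ), Measurable (Function.uncurry F) →
      (∀ x z, |F x z| ≤ |x| + |z|) →
      ((∫ ω, F (v t ω) (y t ω) ∂μ = ∫ ω, (∫ ω', F (v t ω) (y t ω') ∂μ) ∂μ) ∧
        Integrable (fun ω => ∫ ω', F (v t ω) (y t ω') ∂μ) μ) :=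
    fun t F hF hFb =>
      gr_key_indep μ (hmeas t) (hy_meas t) (hint t) (hy_int t) (hy_indep t) F hF hFb
  -- W (t+1) ≤ E[y t]
  have hWy : ∀ (k : ℕ) (t : Fin n), n ≤ (t : ℕ) + 1 + k →
      W ((t : ℕ) + 1) ≤ ∫ ω, y t ω ∂μ := by
    intro k
    induction k with
    | zero =>
      intro t ht
      have hlast : (t : ℕ) + 1 = n := by have := t.isLt; omega
      rw [hlast, hWn]; exact integral_nonneg (hy_nonneg t)
    | succ k ihk =>
      intro t ht
      by_cases h : (t : ℕ) + 1 = n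
      · rw [h, hWn]; exact integral_nonneg (hy_nonneg t)
      · have hlt : (t : ℕ) + 1 < n := by have := t.isLt; omega
        set t' : Fin n := ⟨(t : ℕ) + 1, hlt⟩ with ht'def
        have hc : W ((t' : ℕ) + 1) ≤ ∫ ω, y t' ω ∂μ := ihk t' (by simp [ht'def]; omega)
        have hkey := keyY t' (fun x z => max x z)
          (measurable_fst.max measurable_snd) gr_abs_max_le
        have hintmax : ∀ x : ℝ, Integrable (fun ω' => max x (y t' ω')) μ := fun x =>
          gr_int_max measurable_const (hy_meas t') (integrable_const x) (hy_int t')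
        have hpt : ∀ ω, max (v t' ω) (W ((t' : ℕ) + 1)) ≤ ∫ ω', max (v t' ω) (y t' ω') ∂μ := by
          intro ω
          have hx : v t' ω ≤ ∫ ω', max (v t' ω) (y t' ω') ∂μ := by
            have h1 := integral_mono (μ := μ) (integrable_const (v t' ω))
              (hintmax (v t' ω)) (fun ω' => le_max_left (v t' ω) (y t' ω'))
            simpa using h1
          have hy2 : ∫ ω', y t' ω' ∂μ ≤ ∫ ω', max (v t' ω) (y t' ω') ∂μ :=
            integral_mono (hy_int t') (hintmax _) (fun ω' => le_max_right _ _)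
          exact max_le hx (le_trans hc hy2)
        have hstep : W ((t : ℕ) + 1) = ∫ ω, max (v t' ω) (W ((t' : ℕ) + 1)) ∂μ := hW t'
        rw [hstep]
        calc ∫ ω, max (v t' ω) (W ((t' : ℕ) + 1)) ∂μ
            ≤ ∫ ω, (∫ ω', max (v t' ω) (y t' ω') ∂μ) ∂μ :=
              integral_mono
                (gr_int_max (hmeas t') measurable_const (hint t') (integrable_const _))
                hkey.2 hpt
          _ = ∫ ω, max (v t' ω) (y t' ω) ∂μ := hkey.1.symm
          _ = ∫ ω, y t ω ∂μ :=
              integral_congr_ae (Filter.Eventually.of_forall fun ω =>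
                (hy_step t t' rfl ω).symm)
  have hWyt : ∀ t : Fin n, W ((t : ℕ) + 1) ≤ ∫ ω, y t ω ∂μ := fun t => hWy n t (by omega)
  -- golden ratio facts
  have h5 : Real.sqrt 5 ^ 2 = 5 := Real.sq_sqrt (by norm_num)
  have h5n : 0 ≤ Real.sqrt 5 := Real.sqrt_nonneg 5
  have hφ1 : 1 < φ := by rw [hφ]; nlinarith
  have hφ0 : 0 < φ := lt_trans one_pos hφ1
  have hφsq : φ ^ 2 = φ + 1 := by rw [hφ]; nlinarith
  have hφinv : φ * φ⁻¹ = 1 := mul_inv_cancel₀ (ne_of_gt hφ0)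
  have hinv0 : 0 < φ⁻¹ := inv_pos.mpr hφ0
  have hinv_eq : φ⁻¹ = φ - 1 := by
    field_simp
    nlinarith
  have hφle2 : φ ≤ 2 := by rw [hφ]; nlinarith
  have hq : φ ^ 2 - φ - 1 = 0 := by linarith [hφsq]
  have hinv1 : φ⁻¹ ≤ 1 := by rw [hinv_eq]; linarith
  -- the main one-step estimate
  have step : ∀ t : Fin n,
      φ⁻¹ * W ((t : ℕ) + 1) ≤ A ((t : ℕ) + 1) →
      φ⁻¹ * α t ≤ A ((t : ℕ) + 1) →
      β t ≤ A ((t : ℕ) + 1) →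
      (φ⁻¹ * W (t : ℕ) ≤ A (t : ℕ) ∧
        ∀ t₀ : Fin n, (t₀ : ℕ) + 1 = (t : ℕ) →
          φ⁻¹ * α t₀ ≤ A (t : ℕ) ∧ β t₀ ≤ A (t : ℕ)) := by
    intro t hIH1 hIH2 hIH3
    have hα0 : 0 ≤ α t := by
      rw [hα]
      exact mul_nonneg (le_of_lt hinv0) (integral_nonneg (hy_nonneg t))
    have hβt0 : 0 ≤ β t := hβ0 t
    have hτα : α t ≤ τ t := by rw [hτ]; exact le_max_left _ _
    have hτβ : β t ≤ τ t := by rw [hτ]; exact le_max_right _ _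
    have hτ0 : 0 ≤ τ t := le_trans hα0 hτα
    have hEY : ∫ ω, y t ω ∂μ = φ * α t := by
      rw [hα, ← mul_assoc, mul_inv_cancel₀ (ne_of_gt hφ0), one_mul]
    have hW'le : W ((t : ℕ) + 1) ≤ φ * τ t :=
      le_trans (hWyt t) (by rw [hEY]; nlinarith)
    have hA'τ : φ⁻¹ * τ t ≤ A ((t : ℕ) + 1) := by
      rw [hτ]
      rcases le_total (α t) (β t) with h | h
      · rw [max_eq_right h]
        exact le_trans (by nlinarith) hIH3
      · rw [max_eq_left h]; exact hIH2
    have hA'0 : 0 ≤ A ((t : ℕ) + 1) := le_trans hβt0 hIH3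
    -- representation of A t as an integral
    set c : ℝ → ℝ := fun x => if τ t ≤ x then x else A ((t : ℕ) + 1) with hcdef
    have hcm : Measurable c :=
      Measurable.ite (measurableSet_le measurable_const measurable_id)
        measurable_id measurable_const
    have hcvm : Measurable fun ω => c (v t ω) := hcm.comp (hmeas t)
    have hcb : ∀ x : ℝ, |c x| ≤ |x| + |A ((t : ℕ) + 1)| := by
      intro x
      simp only [hcdef]
      by_cases h : τ t ≤ x
      · rw [if_pos h]; nlinarith [abs_nonneg (A ((t : ℕ) + 1))]
      · rw [if_neg h]; nlinarith [abs_nonneg x]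
    have hcint : Integrable (fun ω => c (v t ω)) μ := by
      refine ((hint t).abs.add (integrable_const |A ((t : ℕ) + 1)|)).mono'
        hcvm.aestronglyMeasurable (Filter.Eventually.of_forall fun ω => ?_)
      simpa [Real.norm_eq_abs] using hcb (v t ω)
    have hsetm : MeasurableSet {ω | v t ω < τ t} :=
      measurableSet_lt (hmeas t) measurable_const
    have hrep : ∀ ω, c (v t ω) = (if τ t ≤ v t ω then v t ω else 0)
        + Set.indicator {ω | v t ω < τ t} (fun _ => A ((t : ℕ) + 1)) ω := by
      intro ω
      by_cases h : τ t ≤ v t ω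
      · have hnm : ω ∉ {ω | v t ω < τ t} := by simp [Set.mem_setOf_eq, not_lt.mpr h]
        simp only [hcdef]; simp [if_pos h, Set.indicator_of_notMem hnm]
      · have hm : ω ∈ {ω | v t ω < τ t} := by simp [Set.mem_setOf_eq, not_le.mp h]
        simp only [hcdef]; simp [if_neg h, Set.indicator_of_mem hm]
    have hint1 : Integrable (fun ω => if τ t ≤ v t ω then v t ω else 0) μ := by
      refine (hint t).mono'
        ((Measurable.ite (measurableSet_le measurable_const (hmeas t)) (hmeas t)
          measurable_const).aestronglyMeasurable)
        (Filter.Eventually.of_forall fun ω => ?_)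
      by_cases h : τ t ≤ v t ω
      · rw [if_pos h, Real.norm_eq_abs, abs_of_nonneg (hnonneg t ω)]
      · rw [if_neg h, norm_zero]; exact hnonneg t ω
    have hint2 : Integrable
        (Set.indicator {ω | v t ω < τ t} (fun _ => A ((t : ℕ) + 1))) μ :=
      (integrable_const _).indicator hsetm
    have hAk : A (t : ℕ) = ∫ ω, c (v t ω) ∂μ := by
      rw [hA t,
        show (fun ω => c (v t ω)) = fun ω => (if τ t ≤ v t ω then v t ω else 0)
          + Set.indicator {ω | v t ω < τ t} (fun _ => A ((t : ℕ) + 1)) ω from funext hrep,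
        integral_add hint1 hint2, integral_indicator_const _ hsetm, smul_eq_mul]
      rfl
    -- Part 1 : φ⁻¹ W t ≤ A t
    have hptC1 : ∀ x : ℝ, φ⁻¹ * max x (W ((t : ℕ) + 1)) ≤ c x := by
      intro x
      simp only [hcdef]
      by_cases h : τ t ≤ x
      · rw [if_pos h]
        have hx0 : 0 ≤ x := le_trans hτ0 h
        have h1 : max x (W ((t : ℕ) + 1)) ≤ φ * x :=
          max_le (by nlinarith) (le_trans hW'le (by nlinarith))
        calc φ⁻¹ * max x (W ((t : ℕ) + 1)) ≤ φ⁻¹ * (φ * x) :=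
              mul_le_mul_of_nonneg_left h1 (le_of_lt hinv0)
          _ = x := by rw [← mul_assoc, inv_mul_cancel₀ (ne_of_gt hφ0), one_mul]
      · rw [if_neg h]
        push_neg at h
        rcases le_total x (W ((t : ℕ) + 1)) with h2 | h2
        · rw [max_eq_right h2]; exact hIH1
        · rw [max_eq_left h2]
          refine le_trans ?_ hA'τ
          nlinarith [h.le]
    have hG1 : φ⁻¹ * W (t : ℕ) ≤ A (t : ℕ) := by
      rw [hW t, hAk, ← integral_const_mul]
      exact integral_mono
        ((gr_int_max (hmeas t) measurable_const (hint t) (integrable_const _)).const_mul _)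
        hcint (fun ω => hptC1 (v t ω))
    refine ⟨hG1, ?_⟩
    intro t₀ ht₀
    have hyt₀ : ∀ ω, y t₀ ω = max (v t ω) (y t ω) := hy_step t₀ t ht₀.symm
    -- integrability helpers
    have hint_pos : ∀ cc : ℝ, 0 ≤ cc → Integrable (fun ω => max (y t ω - cc) 0) μ := by
      intro cc hcc
      refine (hy_int t).mono'
        ((((hy_meas t).sub measurable_const).max measurable_const).aestronglyMeasurable)
        (Filter.Eventually.of_forall fun ω => ?_)
      rw [Real.norm_eq_abs, abs_of_nonneg (le_max_right _ _)]
      exact max_le (by linarith [hy_nonneg t ω]) (hy_nonneg t ω)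
    have hintmax : ∀ x : ℝ, Integrable (fun ω' => max x (y t ω')) μ := fun x =>
      gr_int_max measurable_const (hy_meas t) (integrable_const x) (hy_int t)
    have hintGx : ∀ x cc : ℝ, Integrable (fun ω' => max (max x (y t ω') - cc) 0) μ := by
      intro x cc
      refine ((integrable_const (|x| + |cc|)).add (hy_int t).abs).mono'
        ((((measurable_const.max (hy_meas t)).sub measurable_const).max
          measurable_const).aestronglyMeasurable)
        (Filter.Eventually.of_forall fun ω' => ?_)
      rw [Real.norm_eq_abs, abs_of_nonneg (le_max_right _ _)]
      have hb := gr_abs_max_le x (y t ω')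
      have hb2 : max x (y t ω') ≤ |x| + |y t ω'| := le_trans (le_abs_self _) hb
      have : max (max x (y t ω') - cc) 0 ≤ |x| + |cc| + |y t ω'| := by
        refine max_le ?_ (by positivity)
        nlinarith [neg_abs_le cc]
      simpa [Real.norm_eq_abs] using this
    -- Part 2a : φ⁻¹ α t₀ ≤ A t
    have hkeymax := keyY t (fun x z => max x z)
      (measurable_fst.max measurable_snd) gr_abs_max_le
    have hh_le1 : ∀ x : ℝ, 0 ≤ x →
        (∫ ω', max x (y t ω') ∂μ) ≤ x + φ * α t := by
      intro x hx
      have hpt : ∀ ω', max x (y t ω') ≤ x + y t ω' := fun ω' =>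
        max_le (le_add_of_nonneg_right (hy_nonneg t ω')) (le_add_of_nonneg_left hx)
      calc (∫ ω', max x (y t ω') ∂μ) ≤ ∫ ω', (x + y t ω') ∂μ :=
            integral_mono (hintmax x) ((integrable_const x).add (hy_int t)) hpt
        _ = x + φ * α t := by
            rw [integral_add (integrable_const x) (hy_int t), integral_const, hEY]
            simp
    have hh_le2 : ∀ x : ℝ,
        (∫ ω', max x (y t ω') ∂μ) ≤ max x (φ * β t) + β t := by
      intro x
      have hpt : ∀ ω', max x (y t ω') ≤ max x (φ * β t) + max (y t ω' - φ * β t) 0 := by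
        intro ω'
        rcases le_total (y t ω') (φ * β t) with h | h
        · exact le_trans (max_le_max (le_refl x) h)
            (le_add_of_nonneg_right (le_max_right _ _))
        · have h1 := le_max_right x (φ * β t)
          have h2 := le_max_left (y t ω' - φ * β t) (0 : ℝ)
          have h3 := le_max_left x (φ * β t)
          exact max_le (by linarith) (by linarith)
      calc (∫ ω', max x (y t ω') ∂μ)
          ≤ ∫ ω', (max x (φ * β t) + max (y t ω' - φ * β t) 0) ∂μ :=
            integral_mono (hintmax x)
              ((integrable_const _).add (hint_pos _ (by nlinarith))) hpt
        _ = max x (φ * β t) + β t := by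
            rw [integral_add (integrable_const _) (hint_pos _ (by nlinarith)),
              integral_const, hβ t]
            simp
    have hptC2 : ∀ x : ℝ, φ⁻¹ * (φ⁻¹ * (∫ ω', max x (y t ω') ∂μ)) ≤ c x := by
      intro x
      simp only [hcdef]
      by_cases h : τ t ≤ x
      · rw [if_pos h]
        have hx0 : 0 ≤ x := le_trans hτ0 h
        have h1 := hh_le1 x hx0
        have hαx : α t ≤ x := le_trans hτα h
        have h2 : (∫ ω', max x (y t ω') ∂μ) ≤ x + φ * x := by nlinarith
        have h3 : φ⁻¹ * (φ⁻¹ * (x + φ * x)) = x := by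
          rw [hinv_eq]; linear_combination (x * φ) * hq
        nlinarith [mul_le_mul_of_nonneg_left
          (mul_le_mul_of_nonneg_left h2 (le_of_lt hinv0)) (le_of_lt hinv0)]
      · rw [if_neg h]
        push_neg at h
        have h1 := hh_le2 x
        have hmx : max x (φ * β t) ≤ max (τ t) (φ * β t) :=
          max_le_max h.le (le_refl _)
        rcases le_total (α t) (φ * β t) with hc2 | hc2
        · -- τ ≤ φ β, bound φ⁻² (φβ + β) = β ≤ A'
          have hτφβ : τ t ≤ φ * β t := by
            rw [hτ]; exact max_le hc2 (by nlinarith)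
          have h4 : (∫ ω', max x (y t ω') ∂μ) ≤ φ * β t + β t := by
            rcases max_cases x (φ * β t) with ⟨he, _⟩ | ⟨he, _⟩ <;> rw [he] at h1 <;>
              nlinarith [h.le, hτφβ]
          have h5 : φ⁻¹ * (φ⁻¹ * (φ * β t + β t)) = β t := by
            rw [hinv_eq]; linear_combination (β t * φ) * hq
          refine le_trans ?_ hIH3
          nlinarith [mul_le_mul_of_nonneg_left
            (mul_le_mul_of_nonneg_left h4 (le_of_lt hinv0)) (le_of_lt hinv0)]
        · -- φβ ≤ α, bound φ⁻² (α + β) ≤ φ⁻¹ α ≤ A'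
          have hβα : β t ≤ φ⁻¹ * α t := by
            rw [hinv_eq]
            nlinarith [mul_nonneg (sub_nonneg.mpr hφ1.le) (sub_nonneg.mpr hc2)]
          have hτa : τ t = α t := by
            rw [hτ]; exact max_eq_left (by nlinarith)
          have h4 : (∫ ω', max x (y t ω') ∂μ) ≤ α t + β t := by
            rcases max_cases x (φ * β t) with ⟨he, _⟩ | ⟨he, _⟩ <;> rw [he] at h1 <;>
              nlinarith [h.le, hτa, hc2]
          have h5 : φ⁻¹ * (φ⁻¹ * (α t + φ⁻¹ * α t)) = φ⁻¹ * α t := by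
            rw [hinv_eq]; linear_combination (α t * (φ - 1)) * hq
          refine le_trans ?_ hIH2
          nlinarith [mul_le_mul_of_nonneg_left
            (mul_le_mul_of_nonneg_left h4 (le_of_lt hinv0)) (le_of_lt hinv0), hβα,
            mul_pos hinv0 hinv0]
    have hG2a : φ⁻¹ * α t₀ ≤ A (t : ℕ) := by
      have e1 : ∫ ω, y t₀ ω ∂μ = ∫ ω, max (v t ω) (y t ω) ∂μ :=
        integral_congr_ae (Filter.Eventually.of_forall hyt₀)
      have e3 : φ⁻¹ * α t₀
          = ∫ ω, φ⁻¹ * (φ⁻¹ * (∫ ω', max (v t ω) (y t ω') ∂μ)) ∂μ := by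
        rw [hα t₀, e1, hkeymax.1, integral_const_mul, integral_const_mul]
      rw [e3, hAk]
      exact integral_mono ((hkeymax.2.const_mul _).const_mul _) hcint
        (fun ω => hptC2 (v t ω))
    -- Part 2b : β t₀ ≤ A t
    have hB0 : 0 ≤ β t₀ := hβ0 t₀
    have hφB0 : 0 ≤ φ * β t₀ := by nlinarith
    have hkeyB := keyY t (fun x z => max (max x z - φ * β t₀) 0)
      (((measurable_fst.max measurable_snd).sub measurable_const).max measurable_const)
      (by
        intro x z
        rw [abs_of_nonneg (le_max_right _ _)]
        have hb : max x z ≤ |x| + |z| := le_trans (le_abs_self _) (gr_abs_max_le x z)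
        refine max_le (by nlinarith) (by positivity))
    have hintB : Integrable (fun ω => max (max (v t ω) (y t ω) - φ * β t₀) 0) μ := by
      refine (((hint t).abs.add (hy_int t).abs)).mono'
        ((((hmeas t).max (hy_meas t)).sub measurable_const).max
          measurable_const).aestronglyMeasurable
        (Filter.Eventually.of_forall fun ω => ?_)
      show ‖max (max (v t ω) (y t ω) - φ * β t₀) 0‖ ≤ |v t ω| + |y t ω|
      rw [Real.norm_eq_abs, abs_of_nonneg (le_max_right _ _)]
      have hb : max (v t ω) (y t ω) ≤ |v t ω| + |y t ω| :=
        le_trans (le_abs_self _) (gr_abs_max_le _ _)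
      have h0 : (0:ℝ) ≤ |v t ω| + |y t ω| := by positivity
      exact max_le (by nlinarith [hb, hφB0]) h0
    have hBeq : ∫ ω, max (max (v t ω) (y t ω) - φ * β t₀) 0 ∂μ = β t₀ := by
      calc ∫ ω, max (max (v t ω) (y t ω) - φ * β t₀) 0 ∂μ
          = ∫ ω, max (y t₀ ω - φ * β t₀) 0 ∂μ :=
            integral_congr_ae (Filter.Eventually.of_forall fun ω => by
              show max (max (v t ω) (y t ω) - φ * β t₀) 0 = max (y t₀ ω - φ * β t₀) 0
              rw [hyt₀ ω])
        _ = β t₀ := hβ t₀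
    have hBβ : β t ≤ β t₀ := by
      by_contra hcon
      push_neg at hcon
      have hm1 : ∫ ω, max (y t ω - φ * β t) 0 ∂μ ≤ ∫ ω, max (y t ω - φ * β t₀) 0 ∂μ :=
        integral_mono (hint_pos _ (by nlinarith)) (hint_pos _ hφB0)
          (fun ω => max_le_max (by nlinarith) (le_refl _))
      have hm2 : ∫ ω, max (y t ω - φ * β t₀) 0 ∂μ
          ≤ ∫ ω, max (max (v t ω) (y t ω) - φ * β t₀) 0 ∂μ :=
        integral_mono (hint_pos _ hφB0) hintB
          (fun ω => max_le_max (by nlinarith [le_max_right (v t ω) (y t ω)]) (le_refl _))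
      rw [hβ t] at hm1
      rw [hBeq] at hm2
      linarith
    have hYB_le : ∫ ω, max (y t ω - φ * β t₀) 0 ∂μ ≤ β t := by
      rw [← hβ t]
      exact integral_mono (hint_pos _ hφB0) (hint_pos _ (by nlinarith))
        (fun ω => max_le_max (by nlinarith) (le_refl _))
    have hαB : α t ≤ φ * β t₀ := by
      have h1 : ∫ ω, (y t ω - φ * β t₀) ∂μ ≤ β t₀ := by
        rw [← hBeq]
        refine integral_mono ((hy_int t).sub (integrable_const _)) hintB fun ω => ?_
        exact le_trans (by nlinarith [le_max_right (v t ω) (y t ω)]) (le_max_left _ _)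
      rw [integral_sub (hy_int t) (integrable_const _), integral_const, hEY] at h1
      simp only [measure_univ, ENNReal.toReal_one, smul_eq_mul, one_mul, probReal_univ] at h1
      nlinarith
    have hτB : τ t ≤ φ * β t₀ := by
      rw [hτ]; exact max_le hαB (by nlinarith)
    have hGpt : ∀ x : ℝ, (∫ ω', max (max x (y t ω') - φ * β t₀) 0 ∂μ) ≤ c x := by
      intro x
      have hsplit : ∀ ω', max (max x (y t ω') - φ * β t₀) 0
          ≤ max (x - φ * β t₀) 0 + max (y t ω' - φ * β t₀) 0 := by
        intro ω'
        rcases le_total x (y t ω') with h | h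
        · rw [max_eq_right h]
          exact le_add_of_nonneg_left (le_max_right _ _)
        · rw [max_eq_left h]
          exact le_add_of_nonneg_right (le_max_right _ _)
      have h1 : (∫ ω', max (max x (y t ω') - φ * β t₀) 0 ∂μ)
          ≤ max (x - φ * β t₀) 0 + β t := by
        calc (∫ ω', max (max x (y t ω') - φ * β t₀) 0 ∂μ)
            ≤ ∫ ω', (max (x - φ * β t₀) 0 + max (y t ω' - φ * β t₀) 0) ∂μ :=
              integral_mono (hintGx x _) ((integrable_const _).add (hint_pos _ hφB0))
                hsplit
          _ = max (x - φ * β t₀) 0 + ∫ ω', max (y t ω' - φ * β t₀) 0 ∂μ := by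
              rw [integral_add (integrable_const _) (hint_pos _ hφB0), integral_const]
              simp
          _ ≤ max (x - φ * β t₀) 0 + β t := by linarith [hYB_le]
      simp only [hcdef]
      by_cases h : τ t ≤ x
      · rw [if_pos h]
        rcases le_total x (φ * β t₀) with h2 | h2
        · have he : max (x - φ * β t₀) 0 = 0 := max_eq_right (by nlinarith)
          rw [he] at h1
          linarith [hτβ, h]
        · have he : max (x - φ * β t₀) 0 = x - φ * β t₀ := max_eq_left (by nlinarith)
          rw [he] at h1
          nlinarith [hBβ, hB0]
      · rw [if_neg h]
        push_neg at h
        have he : max (x - φ * β t₀) 0 = 0 :=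
          max_eq_right (by nlinarith [le_trans h.le hτB])
        rw [he] at h1
        linarith [hIH3]
    have hG2b : β t₀ ≤ A (t : ℕ) := by
      calc β t₀ = ∫ ω, max (max (v t ω) (y t ω) - φ * β t₀) 0 ∂μ := hBeq.symm
        _ = ∫ ω, (∫ ω', max (max (v t ω) (y t ω') - φ * β t₀) 0 ∂μ) ∂μ := hkeyB.1
        _ ≤ ∫ ω, c (v t ω) ∂μ :=
            integral_mono hkeyB.2 hcint (fun ω => hGpt (v t ω))
        _ = A (t : ℕ) := hAk.symm
    exact ⟨hG2a, hG2b⟩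
  -- main downward induction
  have main : ∀ j : ℕ, j ≤ n →
      (φ⁻¹ * W (n - j) ≤ A (n - j) ∧
        ∀ t₀ : Fin n, (t₀ : ℕ) + 1 = n - j →
          φ⁻¹ * α t₀ ≤ A (n - j) ∧ β t₀ ≤ A (n - j)) := by
    intro j
    induction j with
    | zero =>
      intro _
      simp only [Nat.sub_zero]
      refine ⟨by rw [hWn, hAn, mul_zero], ?_⟩
      intro t₀ ht₀
      have h1 : ∀ ω, max (y t₀ ω - φ * β t₀) 0 = 0 := fun ω => by
        rw [hy_last t₀ ht₀ ω]
        exact max_eq_right (by nlinarith [hβ0 t₀])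
      have h2 : β t₀ = 0 := by
        rw [← hβ t₀, integral_congr_ae (Filter.Eventually.of_forall h1)]
        simp
      have h3 : α t₀ = 0 := by
        rw [hα t₀, integral_congr_ae (Filter.Eventually.of_forall (hy_last t₀ ht₀))]
        simp
      rw [hAn, h2, h3, mul_zero]
      exact ⟨le_refl 0, le_refl 0⟩
    | succ j ihj =>
      intro hj1
      have ihh := ihj (by omega)
      have hkn : n - (j + 1) < n := by omega
      have hk1 : (n - (j + 1)) + 1 = n - j := by omega
      rw [← hk1] at ihh
      have hst := step ⟨n - (j + 1), hkn⟩ ihh.1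
        (ihh.2 ⟨n - (j + 1), hkn⟩ rfl).1 (ihh.2 ⟨n - (j + 1), hkn⟩ rfl).2
      exact ⟨hst.1, fun t₀ ht₀ => hst.2 t₀ ht₀⟩
  have hfin := (main n le_rfl).1
  rw [Nat.sub_self] at hfin
  exact hfin
end

section
/- Let φ = (1+√5)/2. For every 1 ≤ t ≤ n−1, it holds that A_{t+1} ≥ β_t and β_t ≥ φ⁻²·E[y_t] (equivalently β_t ≥ φ⁻¹·α_t). (Lemma 3.2, the key lemma in the proof of the golden-ratio order competitive ratio.) -/
open MeasureTheory ProbabilityTheory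

set_option maxHeartbeats 1000000 in
/-- Lemma 3.2 (the key lemma). Boxes are 0-indexed: `v 0, …, v (n-1)` are
independent, nonnegative, integrable random variables.
`y t ω = max_{s > t} v s ω` (the empty supremum in `ℝ` is `0`),
`α t = φ⁻¹·E[y t]`, `β t ≥ 0` solves `E[(y t − φ·x)⁺] = x`, and
`τ t = max (α t) (β t)`. The order-unaware algorithm's value satisfies
`A n = 0` and `A t = E[v t · 1{v t ≥ τ t}] + Pr[v t < τ t] · A (t+1)`.
Then for every `1 ≤ t ≤ n−1` (0-indexed: every `t` with `t + 1 < n`),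
`A (t+1) ≥ β t` and `β t ≥ φ⁻²·E[y t]` (equivalently `β t ≥ φ⁻¹·α t`),
where `φ = (1+√5)/2` is the golden ratio. -/
theorem key_lemma_alg_ge_beta {Ω : Type*} [MeasurableSpace Ω]
    (μ : Measure Ω) [IsProbabilityMeasure μ]
    (n : ℕ) (hn : 1 ≤ n)
    (v : Fin n → Ω → ℝ)
    (hmeas : ∀ t, Measurable (v t))
    (hnonneg : ∀ t ω, 0 ≤ v t ω)
    (hint : ∀ t, Integrable (v t) μ)
    (hindep : iIndepFun v μ)
    (φ : ℝ) (hφ : φ = (1 + Real.sqrt 5) / 2)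
    (y : Fin n → Ω → ℝ)
    (hy : ∀ t ω, y t ω = ⨆ s : {s : Fin n // t < s}, v s ω)
    (α β τ : Fin n → ℝ)
    (hα : ∀ t, α t = φ⁻¹ * ∫ ω, y t ω ∂μ)
    (hβ0 : ∀ t, 0 ≤ β t)
    (hβ : ∀ t, (∫ ω, max (y t ω - φ * β t) 0 ∂μ) = β t)
    (hτ : ∀ t, τ t = max (α t) (β t))
    (A : ℕ → ℝ)
    (hAn : A n = 0)
    (hA : ∀ t : Fin n, A t =
      (∫ ω, (if τ t ≤ v t ω then v t ω else 0) ∂μ)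
        + (μ {ω | v t ω < τ t}).toReal * A ((t : ℕ) + 1)) :
    ∀ t : Fin n, (t : ℕ) + 1 < n →
      β t ≤ A ((t : ℕ) + 1) ∧ φ⁻¹ ^ 2 * (∫ ω, y t ω ∂μ) ≤ β t := by
  have h5 : (0:ℝ) ≤ 5 := by norm_num
  have hs5 : Real.sqrt 5 ^ 2 = 5 := Real.sq_sqrt h5
  have hφ1 : 1 ≤ φ := by rw [hφ]; nlinarith [Real.sqrt_nonneg 5]
  have hφ0 : 0 < φ := by linarith
  have hφne : φ ≠ 0 := ne_of_gt hφ0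
  have hφsq : φ ^ 2 = φ + 1 := by rw [hφ]; linear_combination (1/4 : ℝ) * hs5
  have hφinv1 : φ⁻¹ ≤ 1 := by
    rw [inv_le_one_iff₀]; right; exact hφ1
  have hφinv0 : 0 ≤ φ⁻¹ := by positivity
  -- basic facts about y
  have hymeas : ∀ t, Measurable (y t) := by
    intro t
    have : y t = fun ω => ⨆ s : {s : Fin n // t < s}, v s ω := funext (hy t)
    rw [this]
    exact Measurable.iSup fun s => hmeas s
  have hy0 : ∀ t ω, 0 ≤ y t ω := by
    intro t ω
    rw [hy t ω]
    rcases isEmpty_or_nonempty {s : Fin n // t < s} with h|h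
    · simp
    · obtain ⟨s⟩ := h
      exact le_trans (hnonneg s ω)
        (le_ciSup (f := fun r : {r : Fin n // t < r} => v r ω)
          (Set.Finite.bddAbove (Set.finite_range _)) s)
  have hvle : ∀ (t r : Fin n), t < r → ∀ ω, v r ω ≤ y t ω := by
    intro t r htr ω
    rw [hy t ω]
    exact le_ciSup (f := fun r : {r : Fin n // t < r} => v r ω)
      (Set.Finite.bddAbove (Set.finite_range _)) ⟨r, htr⟩
  have hyle : ∀ t ω, y t ω ≤ ∑ s : Fin n, v s ω := by
    intro t ω
    rw [hy t ω]
    rcases isEmpty_or_nonempty {s : Fin n // t < s} with h|h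
    · simp only [Real.iSup_of_isEmpty]
      exact Finset.sum_nonneg fun s _ => hnonneg s ω
    · exact ciSup_le fun s => Finset.single_le_sum (fun i _ => hnonneg i ω) (Finset.mem_univ _)
  have hyint : ∀ t, Integrable (y t) μ := by
    intro t
    have hsum : Integrable (fun ω => ∑ s : Fin n, v s ω) μ :=
      integrable_finset_sum _ (fun s _ => hint s)
    refine hsum.mono' (hymeas t).aestronglyMeasurable (Filter.Eventually.of_forall fun ω => ?_)
    rw [Real.norm_eq_abs, abs_of_nonneg (hy0 t ω)]
    exact hyle t ω
  -- integrability of positive parts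
  have hpos : ∀ (f : Ω → ℝ), Measurable f → Integrable f μ → (∀ ω, 0 ≤ f ω) →
      ∀ c : ℝ, 0 ≤ c → Integrable (fun ω => max (f ω - c) 0) μ := by
    intro f hm hi h0 c hc
    refine hi.mono' (((hm.sub measurable_const).max measurable_const).aestronglyMeasurable)
      (Filter.Eventually.of_forall fun ω => ?_)
    rw [Real.norm_eq_abs, abs_of_nonneg (le_max_right _ _)]
    exact max_le (by linarith [h0 ω]) (h0 ω)
  have hmono : ∀ (t : Fin n) (c c' : ℝ), 0 ≤ c → c ≤ c' →
      (∫ ω, max (y t ω - c') 0 ∂μ) ≤ ∫ ω, max (y t ω - c) 0 ∂μ := by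
    intro t c c' hc hcc
    exact integral_mono (hpos (y t) (hymeas t) (hyint t) (hy0 t) c' (hc.trans hcc))
      (hpos (y t) (hymeas t) (hyint t) (hy0 t) c hc)
      (fun ω => max_le_max (by linarith) le_rfl)
  -- Part 2 (for every index)
  have part2 : ∀ t : Fin n, φ⁻¹ ^ 2 * (∫ ω, y t ω ∂μ) ≤ β t := by
    intro t
    have hc0 : (0:ℝ) ≤ φ * β t := mul_nonneg hφ0.le (hβ0 t)
    have hle : (∫ ω, (y t ω - φ * β t) ∂μ) ≤ ∫ ω, max (y t ω - φ * β t) 0 ∂μ :=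
      integral_mono ((hyint t).sub (integrable_const _))
        (hpos (y t) (hymeas t) (hyint t) (hy0 t) _ hc0) (fun ω => le_max_left _ _)
    rw [integral_sub (hyint t) (integrable_const _), integral_const, probReal_univ,
      one_smul, hβ t] at hle
    have hkey : φ⁻¹ ^ 2 * (φ + 1) = 1 := by
      rw [← hφsq, ← mul_pow, inv_mul_cancel₀ hφne, one_pow]
    calc φ⁻¹ ^ 2 * (∫ ω, y t ω ∂μ) ≤ φ⁻¹ ^ 2 * ((φ + 1) * β t) :=
          mul_le_mul_of_nonneg_left (by linarith) (by positivity)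
      _ = β t := by rw [← mul_assoc, hkey, one_mul]
  -- y at the last index vanishes
  have hylast : ∀ t : Fin n, ¬((t:ℕ) + 1 < n) → ∀ ω, y t ω = 0 := by
    intro t ht ω
    rw [hy t ω]
    have : IsEmpty {s : Fin n // t < s} := by
      refine ⟨fun s => ht ?_⟩
      have h1 : (t:ℕ) < (s:ℕ) := s.2
      have h2 : (s:ℕ) < n := s.1.isLt
      omega
    exact Real.iSup_of_isEmpty _
  have hβlast : ∀ t : Fin n, ¬((t:ℕ) + 1 < n) → β t = 0 := by
    intro t ht
    have h0 : (∫ ω, max (y t ω - φ * β t) 0 ∂μ) = 0 := by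
      have hpt : ∀ ω, max (y t ω - φ * β t) 0 = 0 := by
        intro ω
        rw [hylast t ht ω]
        apply max_eq_right
        nlinarith [hβ0 t]
      simp only [hpt, integral_zero]
    rw [hβ t] at h0
    exact h0
  -- y recursion y t = max (v (t+1)) (y (t+1))
  have hyrec : ∀ (t s : Fin n), (s:ℕ) = (t:ℕ) + 1 → ∀ ω, y t ω = max (v s ω) (y s ω) := by
    intro t s hts ω
    have hts' : t < s := by
      rw [Fin.lt_def]; omega
    apply le_antisymm
    · rw [hy t ω]
      haveI : Nonempty {r : Fin n // t < r} := ⟨⟨s, hts'⟩⟩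
      refine ciSup_le fun r => ?_
      by_cases h : (r : Fin n) = s
      · rw [h]; exact le_max_left _ _
      · have hsr : s < (r : Fin n) := by
          rw [Fin.lt_def]
          have h1 : (t:ℕ) < ((r : Fin n):ℕ) := r.2
          have h2 : ((r : Fin n):ℕ) ≠ (s:ℕ) := fun hc => h (Fin.ext hc)
          omega
        exact le_max_of_le_right (hvle s r hsr ω)
    · refine max_le (hvle t s hts' ω) ?_
      rcases isEmpty_or_nonempty {r : Fin n // s < r} with h|h
      · rw [hy s ω, Real.iSup_of_isEmpty]
        exact hy0 t ω
      · rw [hy s ω]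
        exact ciSup_le fun r => hvle t r (lt_trans hts' r.2) ω
  -- main induction
  have main : ∀ m : ℕ, ∀ t : Fin n, n ≤ (t:ℕ) + 1 + m → β t ≤ A ((t:ℕ) + 1) := by
    intro m
    induction m with
    | zero =>
      intro t ht
      have h1 : (t:ℕ) + 1 = n := by have := t.isLt; omega
      rw [hβlast t (by omega), h1, hAn]
    | succ m ih =>
      intro t ht
      by_cases hlt : (t:ℕ) + 1 < n
      · set s : Fin n := ⟨(t:ℕ) + 1, hlt⟩ with hs
        have hsval : (s:ℕ) = (t:ℕ) + 1 := rfl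
        have hIH : β s ≤ A ((s:ℕ) + 1) := ih s (by rw [hsval]; omega)
        set A' : ℝ := A ((s:ℕ) + 1) with hA'
        set q : ℝ := (μ {ω | v s ω < τ s}).toReal with hq
        set p : ℝ := (μ {ω | τ s ≤ v s ω}).toReal with hp
        set Evτ : ℝ := ∫ ω, max (v s ω - τ s) 0 ∂μ with hEvτ
        have hβτ : β s ≤ τ s := by rw [hτ s]; exact le_max_right _ _
        have hτ0 : 0 ≤ τ s := (hβ0 s).trans hβτ
        -- φ⁻¹ τ s ≤ β s
        have part2τ : φ⁻¹ * τ s ≤ β s := by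
          rw [hτ s]
          rcases max_cases (α s) (β s) with ⟨hm, _⟩|⟨hm, _⟩
          · rw [hm, hα s, ← mul_assoc]
            calc φ⁻¹ * φ⁻¹ * ∫ ω, y s ω ∂μ = φ⁻¹ ^ 2 * ∫ ω, y s ω ∂μ := by ring
              _ ≤ β s := part2 s
          · rw [hm]
            exact mul_le_of_le_one_left (hβ0 s) hφinv1
        -- probabilities sum to 1
        have hset : {ω | v s ω < τ s} = {ω | τ s ≤ v s ω}ᶜ := by
          ext ω; simp [not_le]
        have hSmeas : MeasurableSet {ω | τ s ≤ v s ω} := measurableSet_le measurable_const (hmeas s)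
        have hpq : p + q = 1 := by
          have hu : μ {ω | τ s ≤ v s ω} + μ {ω | v s ω < τ s} = 1 := by
            rw [hset, measure_add_measure_compl hSmeas, measure_univ]
          have := congrArg ENNReal.toReal hu
          rw [ENNReal.toReal_add (measure_ne_top μ _) (measure_ne_top μ _),
            ENNReal.toReal_one] at this
          exact this
        have hp0 : 0 ≤ p := ENNReal.toReal_nonneg
        have hq0 : 0 ≤ q := ENNReal.toReal_nonneg
        have hEvτ0 : 0 ≤ Evτ := integral_nonneg fun ω => le_max_right _ _
        have hEvτint : Integrable (fun ω => max (v s ω - τ s) 0) μ :=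
          hpos (v s) (hmeas s) (hint s) (hnonneg s) _ hτ0
        -- the integral identity
        have hpt : ∀ ω, (if τ s ≤ v s ω then v s ω else 0)
            = Set.indicator {ω | τ s ≤ v s ω} (fun _ => τ s) ω + max (v s ω - τ s) 0 := by
          intro ω
          rw [Set.indicator_apply]
          simp only [Set.mem_setOf_eq]
          split_ifs with h
          · rw [max_eq_left (by linarith)]; ring
          · rw [max_eq_right (by linarith)]; ring
        have hI : (∫ ω, (if τ s ≤ v s ω then v s ω else 0) ∂μ) = τ s * p + Evτ := by
          simp only [hpt]
          rw [integral_add ((integrable_const (τ s)).indicator hSmeas) hEvτint,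
            integral_indicator_const _ hSmeas, smul_eq_mul, mul_comm]
          rfl
        have hAeq : A ((t:ℕ) + 1) = τ s * p + Evτ + q * A' := by
          have := hA s
          rw [hsval, hI] at this
          rw [this]
        set Aₜ : ℝ := A ((t:ℕ) + 1) with hAₜ
        -- β s ≤ Aₜ
        have e4 : β s * p ≤ τ s * p := mul_le_mul_of_nonneg_right hβτ hp0
        have e5 : β s * q ≤ A' * q := mul_le_mul_of_nonneg_right hIH hq0
        have epq : β s * p + β s * q = β s := by rw [← mul_add, hpq, mul_one]
        have h1 : β s ≤ Aₜ := by
          rw [hAeq]; nlinarith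
        -- τ s ≤ φ * Aₜ
        have h_a : φ⁻¹ * τ s ≤ τ s := mul_le_of_le_one_left hτ0 hφinv1
        have h_c : φ⁻¹ * τ s ≤ A' := part2τ.trans hIH
        have e1 : φ⁻¹ * τ s * p ≤ τ s * p := mul_le_mul_of_nonneg_right h_a hp0
        have e2 : φ⁻¹ * τ s * q ≤ A' * q := mul_le_mul_of_nonneg_right h_c hq0
        have e3 : φ⁻¹ * τ s * p + φ⁻¹ * τ s * q = φ⁻¹ * τ s := by
          rw [← mul_add, hpq, mul_one]
        have hAφinv : φ⁻¹ * τ s ≤ Aₜ := by rw [hAeq]; nlinarith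
        have hφA : τ s ≤ φ * Aₜ := by
          have := mul_le_mul_of_nonneg_left hAφinv hφ0.le
          rw [← mul_assoc, mul_inv_cancel₀ hφne, one_mul] at this
          exact this
        have hAₜ0 : 0 ≤ Aₜ := (hβ0 s).trans h1
        have hφβA : φ * β s ≤ φ * Aₜ := mul_le_mul_of_nonneg_left h1 hφ0.le
        -- the key integral bound: ∫ (y t - φ Aₜ)⁺ ≤ Aₜ
        have hG : (∫ ω, max (y t ω - φ * Aₜ) 0 ∂μ) ≤ Aₜ := by
          have hβs0 : (0:ℝ) ≤ φ * β s := mul_nonneg hφ0.le (hβ0 s)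
          have step1 : (∫ ω, max (y t ω - φ * Aₜ) 0 ∂μ)
              ≤ ∫ ω, (max (v s ω - τ s) 0 + max (y s ω - φ * β s) 0) ∂μ := by
            refine integral_mono (hpos (y t) (hymeas t) (hyint t) (hy0 t) _
                (mul_nonneg hφ0.le hAₜ0))
              (hEvτint.add (hpos (y s) (hymeas s) (hyint s) (hy0 s) _ hβs0))
              (fun ω => ?_)
            refine max_le ?_ (add_nonneg (le_max_right _ _) (le_max_right _ _))
            rw [hyrec t s hsval ω]
            rcases max_cases (v s ω) (y s ω) with ⟨hm, _⟩|⟨hm, _⟩ <;> rw [hm]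
            · have := le_max_left (v s ω - τ s) (0:ℝ)
              have := le_max_right (y s ω - φ * β s) (0:ℝ)
              linarith
            · have := le_max_right (v s ω - τ s) (0:ℝ)
              have := le_max_left (y s ω - φ * β s) (0:ℝ)
              linarith
          have step2 : (∫ ω, (max (v s ω - τ s) 0 + max (y s ω - φ * β s) 0) ∂μ)
              = Evτ + β s := by
            rw [integral_add hEvτint (hpos (y s) (hymeas s) (hyint s) (hy0 s) _ hβs0), hβ s]
          rw [step2] at step1
          have step3 : Evτ + β s ≤ Aₜ := by rw [hAeq]; nlinarith
          linarith
        -- conclude β t ≤ Aₜ by the fixed-point argument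
        by_contra hcon
        push_neg at hcon
        have hlow : β t ≤ ∫ ω, max (y t ω - φ * Aₜ) 0 ∂μ := by
          rw [← hβ t]
          exact hmono t (φ * Aₜ) (φ * β t) (mul_nonneg hφ0.le hAₜ0)
            (mul_le_mul_of_nonneg_left hcon.le hφ0.le)
        linarith
      · have h1 : (t:ℕ) + 1 = n := by have := t.isLt; omega
        rw [hβlast t hlt, h1, hAn]
  intro t ht
  exact ⟨main n t (by omega), part2 t⟩
end

section
/- There exists a unique real number λ ∈ (0,1) satisfying λ/(1−λ) = ln(1/λ). (Well-definedness of the constant λ ≈ 0.4464 used by the max-probability algorithm; note ln(1/λ) ≈ 0.806.) -/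
private noncomputable def gfun (l : ℝ) : ℝ := l / (1 - l) + Real.log l

private lemma gfun_mono : StrictMonoOn gfun (Set.Ioo (0:ℝ) 1) := by
  intro x hx y hy hxy
  have h1 : x / (1 - x) < y / (1 - y) := by
    rw [div_lt_div_iff₀ (by linarith [hx.2]) (by linarith [hy.2])]
    nlinarith [hx.1, hx.2, hy.1, hy.2]
  have h2 : Real.log x < Real.log y := Real.log_lt_log hx.1 hxy
  simp only [gfun]; linarith

/-- There exists a unique real `λ ∈ (0,1)` with `λ/(1−λ) = ln(1/λ)`. -/
theorem existsUnique_lambda :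
    ∃! l : ℝ, l ∈ Set.Ioo (0 : ℝ) 1 ∧ l / (1 - l) = Real.log (1 / l) := by
  have hcont : ContinuousOn gfun (Set.Icc (1/10 : ℝ) (9/10)) := by
    intro x hx
    have hx0 : (0:ℝ) < x := lt_of_lt_of_le (by norm_num) hx.1
    have hx1 : x ≠ 1 := by intro h; rw [h] at hx; linarith [hx.2]
    exact ((continuousAt_id.div (continuousAt_const.sub continuousAt_id)
      (sub_ne_zero.mpr (Ne.symm hx1))).add (Real.continuousAt_log hx0.ne')).continuousWithinAt
  have hlo : gfun (1/10) < 0 := by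
    have h10 : (1:ℝ) < Real.log 10 := by
      rw [Real.lt_log_iff_exp_lt (by norm_num)]
      calc Real.exp 1 < 2.7182818286 := Real.exp_one_lt_d9
        _ < 10 := by norm_num
    have : Real.log (1/10 : ℝ) = -Real.log 10 := by
      rw [one_div, Real.log_inv]
    simp only [gfun, this]
    norm_num
    linarith
  have hhi : 0 < gfun (9/10) := by
    have h1 : Real.log (10/9 : ℝ) ≤ 10/9 - 1 := Real.log_le_sub_one_of_pos (by norm_num)
    have h2 : Real.log (9/10 : ℝ) = -Real.log (10/9) := by
      rw [show (9/10 : ℝ) = (10/9)⁻¹ by norm_num, Real.log_inv]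
    simp only [gfun, h2]
    norm_num
    linarith
  obtain ⟨c, hc, hgc⟩ : ∃ c ∈ Set.Icc (1/10 : ℝ) (9/10), gfun c = 0 := by
    have := intermediate_value_Icc (by norm_num : (1/10:ℝ) ≤ 9/10) hcont
    have hmem : (0:ℝ) ∈ Set.Icc (gfun (1/10)) (gfun (9/10)) := ⟨hlo.le, hhi.le⟩
    obtain ⟨c, hc, hgc⟩ := this hmem
    exact ⟨c, hc, hgc⟩
  have hcIoo : c ∈ Set.Ioo (0:ℝ) 1 := ⟨lt_of_lt_of_le (by norm_num) hc.1,
    lt_of_le_of_lt hc.2 (by norm_num)⟩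
  have key : ∀ l ∈ Set.Ioo (0:ℝ) 1, (l / (1 - l) = Real.log (1 / l) ↔ gfun l = 0) := by
    intro l hl
    rw [one_div, Real.log_inv]
    simp only [gfun]
    constructor <;> intro h <;> linarith
  refine ⟨c, ⟨hcIoo, (key c hcIoo).mpr hgc⟩, ?_⟩
  rintro y ⟨hy, hey⟩
  have hgy : gfun y = 0 := (key y hy).mp hey
  exact gfun_mono.injOn hy hcIoo (by rw [hgy, hgc])
end

section
/- Let T be a finite index set, let S ⊆ T, let p_k ∈ [0,1) for each k ∈ T, and let λ ∈ (0,1). If ∏_{s ∈ S} (1 − p_s) ≤ λ, then Σ_{s ∈ S} p_s · ∏_{k ∈ T, k ≠ s} (1 − p_k) ≥ ln(1/λ) · ∏_{k ∈ T} (1 − p_k). (The key computation in Case 4 of the proof of Theorem 4.1: the probability that exactly one of the boxes indexed by S beats the current maximum, and no other box does, is at least ln(1/λ) times the probability that no box beats it.) -/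
/-- Key computation in Case 4 of the proof of Theorem 4.1: if `S ⊆ T` are
finite index sets, `p k ∈ [0,1)` for each `k ∈ T`, `λ ∈ (0,1)` and
`∏_{s ∈ S} (1 − p_s) ≤ λ`, then
`Σ_{s ∈ S} p_s · ∏_{k ∈ T, k ≠ s} (1 − p_k) ≥ ln(1/λ) · ∏_{k ∈ T} (1 − p_k)`. -/
theorem exactly_one_beats_ge {ι : Type*} [DecidableEq ι] (T S : Finset ι) (hST : S ⊆ T)
    (p : ι → ℝ) (hp : ∀ k ∈ T, p k ∈ Set.Ico (0 : ℝ) 1)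
    (lam : ℝ) (hlam : lam ∈ Set.Ioo (0 : ℝ) 1)
    (hprod : ∏ s ∈ S, (1 - p s) ≤ lam) :
    Real.log (1 / lam) * ∏ k ∈ T, (1 - p k)
      ≤ ∑ s ∈ S, p s * ∏ k ∈ T.erase s, (1 - p k) := by
  have h1 : ∀ k ∈ T, 0 < 1 - p k := by
    intro k hk
    have := (hp k hk).2
    linarith
  have hprodT : 0 < ∏ k ∈ T, (1 - p k) := Finset.prod_pos h1
  have key : ∑ s ∈ S, p s * ∏ k ∈ T.erase s, (1 - p k)
      = (∑ s ∈ S, p s / (1 - p s)) * ∏ k ∈ T, (1 - p k) := by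
    rw [Finset.sum_mul]
    refine Finset.sum_congr rfl fun s hs => ?_
    have hsT := hST hs
    have hne : (1 - p s) ≠ 0 := (h1 s hsT).ne'
    rw [← Finset.mul_prod_erase T _ hsT]
    field_simp
  rw [key]
  refine mul_le_mul_of_nonneg_right ?_ hprodT.le
  have hSpos : 0 < ∏ s ∈ S, (1 - p s) := Finset.prod_pos fun s hs => h1 s (hST hs)
  have h2 : Real.log (1 / lam) ≤ -Real.log (∏ s ∈ S, (1 - p s)) := by
    rw [one_div, Real.log_inv]
    exact neg_le_neg (Real.log_le_log hSpos hprod)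
  refine h2.trans ?_
  rw [Real.log_prod fun s hs => (h1 s (hST hs)).ne', ← Finset.sum_neg_distrib]
  refine Finset.sum_le_sum fun s hs => ?_
  have hpos : 0 < 1 - p s := h1 s (hST hs)
  have hinv : 0 < (1 - p s)⁻¹ := inv_pos.mpr hpos
  have hlog := Real.log_le_sub_one_of_pos hinv
  rw [Real.log_inv] at hlog
  have : (1 - p s)⁻¹ - 1 = p s / (1 - p s) := by
    field_simp
    ring
  linarith
end

section
/- For every θ ∈ ℝ, A_1(θ) ≥ ln(1/λ) · W_1(θ). In words: for every arrival order and every initial threshold θ, the adaptive order-unaware algorithm catches the box of maximum value exceeding θ with probability at least ln(1/λ) ≈ 0.806 times the winning probability of the best order-aware online algorithm (Theorem 4.1, Main Result 2). -/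
open MeasureTheory ProbabilityTheory

private lemma down_ind {n : ℕ} {P : ℕ → Prop} (h0 : P n)
    (hs : ∀ t, t < n → P (t + 1) → P t) : ∀ t, t ≤ n → P t := by
  have key : ∀ k t, t + k = n → P t := by
    intro k
    induction k with
    | zero => intro t h; simpa [← h] using h0
    | succ k ih => intro t h; exact hs t (by omega) (ih (t + 1) (by omega))
  intro t ht; exact key (n - t) t (by omega)

private lemma integrable_of_bounds {Ω : Type*} [MeasurableSpace Ω] (μ : Measure Ω)
    [IsFiniteMeasure μ] {f : Ω → ℝ} (hf : Measurable f)
    (h0 : ∀ ω, 0 ≤ f ω) (h1 : ∀ ω, f ω ≤ 1) : Integrable f μ :=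
  ⟨hf.aestronglyMeasurable, HasFiniteIntegral.of_bounded (C := 1)
    (Filter.Eventually.of_forall fun ω => by
      rw [Real.norm_eq_abs, abs_le]; exact ⟨by linarith [h0 ω], h1 ω⟩)⟩

private lemma phi_nonneg {lam g : ℝ} (hl0 : 0 < lam) (hg : lam ≤ g) :
    lam * (1 + Real.log (1 / lam) + Real.log g) ≤ g := by
  have hg0 : 0 < g := lt_of_lt_of_le hl0 hg
  have h := Real.log_le_sub_one_of_pos (x := g / lam) (by positivity)
  rw [Real.log_div (by positivity) (by positivity)] at h
  have h2 : lam * (Real.log g - Real.log lam) ≤ lam * (g / lam - 1) :=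
    mul_le_mul_of_nonneg_left h hl0.le
  have h3 : lam * (g / lam - 1) = g - lam := by field_simp
  rw [one_div, Real.log_inv]
  nlinarith [h2, h3]

private lemma Flog_le {F : ℝ} (h0 : 0 < F) : F * Real.log (1 / F) ≤ 1 - F := by
  have h := Real.log_le_sub_one_of_pos (x := 1 / F) (by positivity)
  have h2 : F * Real.log (1 / F) ≤ F * (1 / F - 1) := mul_le_mul_of_nonneg_left h h0.le
  have h3 : F * (1 / F - 1) = 1 - F := by field_simp
  linarith

private lemma step_low {lam c F g aA R : ℝ} (hl0 : 0 < lam)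
    (hc : c = Real.log (1 / lam))
    (hF0 : 0 ≤ F) (hF1 : F ≤ 1) (hg0 : 0 < g) (hgl : F * g ≤ lam) (hgt : lam < g)
    (hA : g * Real.log (1 / g) ≤ aA) (hC : (1 - F) * g ≤ R) :
    c * (F * g) ≤ F * aA + R := by
  have hlog : Real.log (1 / g) = - Real.log g := by rw [one_div, Real.log_inv]
  have keyF : F * (1 + c + Real.log g) ≤ 1 := by
    by_cases hsig : 1 + c + Real.log g ≤ 0
    · nlinarith
    · push_neg at hsig
      have hphi := phi_nonneg hl0 hgt.le
      rw [← hc] at hphi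
      have h2 : F * g * (1 + c + Real.log g) ≤ lam * (1 + c + Real.log g) :=
        mul_le_mul_of_nonneg_right hgl hsig.le
      nlinarith
  rw [hlog] at hA
  have h3 := mul_le_mul_of_nonneg_left hA hF0
  nlinarith [mul_le_mul_of_nonneg_right keyF hg0.le]

private lemma step_high {F g aA R : ℝ} (hF0 : 0 < F) (hF1 : F ≤ 1) (hg0 : 0 < g)
    (hA : g * Real.log (1 / g) ≤ aA) (hC : (1 - F) * g ≤ R) :
    (F * g) * Real.log (1 / (F * g)) ≤ F * aA + R := by
  have hlogsum : Real.log (1 / (F * g)) = Real.log (1 / F) + Real.log (1 / g) := by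
    rw [one_div, one_div, one_div, mul_inv,
      Real.log_mul (inv_ne_zero (ne_of_gt hF0)) (inv_ne_zero (ne_of_gt hg0))]
  have hFlog := Flog_le hF0
  have h3 := mul_le_mul_of_nonneg_left hA hF0.le
  rw [hlogsum]
  nlinarith [mul_le_mul_of_nonneg_right hFlog hg0.le]

/-- Theorem 4.1 (Main Result 2). Boxes are 0-indexed: `v 0, …, v (n-1)` are
independent random variables with atomless distributions, and `λ ∈ (0,1)` is
the unique solution of `λ/(1−λ) = ln(1/λ)`.
`G t θ = Pr[v s < θ for all s ≥ t]` (so `G n θ = 1`).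
The optimal order-aware winning probability satisfies `W n θ = 0` and
`W t θ = E[max (1{v t > θ}·G (t+1) (v t)) (W (t+1) (max θ (v t)))]`;
the order-unaware algorithm's winning probability satisfies `A n θ = 0` and
`A t θ = E[ if (v t > θ and G (t+1) (v t) ≥ λ) then G (t+1) (v t)
           else A (t+1) (max θ (v t)) ]`.
Then for every initial threshold `θ`, `A 1(θ) ≥ ln(1/λ) · W 1(θ)`, i.e.
(0-indexed) `A 0 θ ≥ ln(1/λ) · W 0 θ`. -/
theorem order_unaware_catch_max {Ω : Type*} [MeasurableSpace Ω]
    (μ : Measure Ω) [IsProbabilityMeasure μ]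
    (n : ℕ) (hn : 1 ≤ n)
    (v : Fin n → Ω → ℝ)
    (hmeas : ∀ t, Measurable (v t))
    (hindep : iIndepFun v μ)
    (hatomless : ∀ t (x : ℝ), μ {ω | v t ω = x} = 0)
    (lam : ℝ) (hlam : lam ∈ Set.Ioo (0 : ℝ) 1)
    (hlam_eq : lam / (1 - lam) = Real.log (1 / lam))
    (G : ℕ → ℝ → ℝ)
    (hG : ∀ (t : ℕ) (θ : ℝ),
      G t θ = (μ {ω | ∀ s : Fin n, t ≤ (s : ℕ) → v s ω < θ}).toReal)
    (A W : ℕ → ℝ → ℝ)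
    (hWn : ∀ θ : ℝ, W n θ = 0)
    (hW : ∀ (t : Fin n) (θ : ℝ), W t θ =
      ∫ ω, max (if θ < v t ω then G ((t : ℕ) + 1) (v t ω) else 0)
               (W ((t : ℕ) + 1) (max θ (v t ω))) ∂μ)
    (hAn : ∀ θ : ℝ, A n θ = 0)
    (hA : ∀ (t : Fin n) (θ : ℝ), A t θ =
      ∫ ω, (if θ < v t ω ∧ lam ≤ G ((t : ℕ) + 1) (v t ω)
            then G ((t : ℕ) + 1) (v t ω)
            else A ((t : ℕ) + 1) (max θ (v t ω))) ∂μ) :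
    ∀ θ : ℝ, A 0 θ ≥ Real.log (1 / lam) * W 0 θ := by
  obtain ⟨hl0, hl1⟩ := hlam
  set c : ℝ := Real.log (1 / lam) with hcdef
  have hmul : c * (1 - lam) = lam := by
    rw [← hlam_eq, div_mul_cancel₀ _ (by linarith : (1 : ℝ) - lam ≠ 0)]
  have hc_pos : 0 < c := Real.log_pos (by rw [lt_div_iff₀ hl0]; linarith)
  have hlhalf : lam < 1 / 2 := by
    have h := Real.log_lt_sub_one_of_pos (x := 1 / lam) (by positivity)
      (by intro h; rw [div_eq_one_iff_eq (by linarith)] at h; linarith)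
    have h2 : lam * c < lam * (1 / lam - 1) := by
      exact mul_lt_mul_of_pos_left h hl0
    have h3 : lam * (1 / lam - 1) = 1 - lam := by field_simp
    nlinarith [hmul]
  have hc1 : c < 1 := by nlinarith [hmul]
  have hlamc : lam * (1 + c) = c := by nlinarith [hmul]
  have hSmeas : ∀ (t : ℕ) (θ : ℝ),
      MeasurableSet {ω | ∀ s : Fin n, t ≤ (s : ℕ) → v s ω < θ} := by
    intro t θ
    have : {ω | ∀ s : Fin n, t ≤ (s : ℕ) → v s ω < θ}
        = ⋂ s : Fin n, {ω | t ≤ (s : ℕ) → v s ω < θ} := by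
      ext ω; simp [Set.mem_iInter]
    rw [this]
    refine MeasurableSet.iInter fun s => ?_
    by_cases h : t ≤ (s : ℕ)
    · have : {ω | t ≤ (s : ℕ) → v s ω < θ} = (v s) ⁻¹' Set.Iio θ := by
        ext ω; simp [h]
      rw [this]; exact (hmeas s) measurableSet_Iio
    · have : {ω | t ≤ (s : ℕ) → v s ω < θ} = Set.univ := by
        ext ω; simp [h]
      rw [this]; exact MeasurableSet.univ
  have hGprod : ∀ (t : ℕ) (θ : ℝ),
      μ {ω | ∀ s : Fin n, t ≤ (s : ℕ) → v s ω < θ}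
        = ∏ s ∈ Finset.univ.filter (fun s : Fin n => t ≤ (s : ℕ)),
            μ ((v s) ⁻¹' Set.Iio θ) := by
    intro t θ
    have hset : {ω | ∀ s : Fin n, t ≤ (s : ℕ) → v s ω < θ}
        = ⋂ s ∈ Finset.univ.filter (fun s : Fin n => t ≤ (s : ℕ)),
            (v s) ⁻¹' Set.Iio θ := by
      ext ω; simp [Set.mem_iInter]
    rw [hset]
    exact hindep.meas_biInter fun i _ => ⟨Set.Iio θ, measurableSet_Iio, rfl⟩
  have hGsplit : ∀ (t : ℕ) (ht : t < n) (θ : ℝ),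
      G t θ = (μ ((v ⟨t, ht⟩) ⁻¹' Set.Iio θ)).toReal * G (t + 1) θ := by
    intro t ht θ
    rw [hG, hG, hGprod, hGprod]
    have hfil : Finset.univ.filter (fun s : Fin n => t ≤ (s : ℕ))
        = insert (⟨t, ht⟩ : Fin n)
            (Finset.univ.filter (fun s : Fin n => t + 1 ≤ (s : ℕ))) := by
      ext s
      simp only [Finset.mem_filter, Finset.mem_univ, true_and, Finset.mem_insert]
      constructor
      · intro h
        rcases eq_or_lt_of_le h with h' | h'
        · left; exact Fin.ext h'.symm
        · right; omega
      · rintro (rfl | h)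
        · exact le_rfl
        · omega
    rw [hfil, Finset.prod_insert (by simp), ENNReal.toReal_mul]
  have hGmono : ∀ t : ℕ, Monotone (G t) := by
    intro t a b hab
    rw [hG, hG]
    refine ENNReal.toReal_mono (measure_ne_top μ _) (measure_mono fun ω hω => ?_)
    exact fun s hs => lt_of_lt_of_le (hω s hs) hab
  have hG0 : ∀ (t : ℕ) (θ : ℝ), 0 ≤ G t θ := fun t θ => by
    rw [hG]; exact ENNReal.toReal_nonneg
  have hG1 : ∀ (t : ℕ) (θ : ℝ), G t θ ≤ 1 := fun t θ => by
    rw [hG]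
    simpa using ENNReal.toReal_mono (by simp) (prob_le_one (μ := μ))
  have hGn : ∀ θ : ℝ, G n θ = 1 := by
    intro θ
    rw [hG]
    have : {ω | ∀ s : Fin n, n ≤ (s : ℕ) → v s ω < θ} = Set.univ := by
      ext ω; simp only [Set.mem_setOf_eq, Set.mem_univ, iff_true]
      intro s hs; exact absurd s.isLt (by omega)
    rw [this]; simp
  have hGmeas : ∀ t : ℕ, Measurable (G t) := fun t => (hGmono t).measurable
  have hFcompl : ∀ (t : Fin n) (θ : ℝ),
      (μ ((v t) ⁻¹' Set.Ioi θ)).toReal = 1 - (μ ((v t) ⁻¹' Set.Iio θ)).toReal := by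
    intro t θ
    have h1 : μ ((v t) ⁻¹' Set.Iic θ) = μ ((v t) ⁻¹' Set.Iio θ) := by
      have : (v t) ⁻¹' Set.Iic θ = (v t) ⁻¹' Set.Iio θ ∪ {ω | v t ω = θ} := by
        ext ω; simp [Set.mem_preimage, le_iff_lt_or_eq]
      rw [this]
      refine le_antisymm (le_trans (measure_union_le _ _) ?_)
        (measure_mono Set.subset_union_left)
      simp [hatomless t θ]
    have h2 : (v t) ⁻¹' Set.Ioi θ = ((v t) ⁻¹' Set.Iic θ)ᶜ := by
      rw [← Set.preimage_compl, Set.compl_Iic]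
    rw [h2, prob_compl_eq_one_sub ((hmeas t) measurableSet_Iic), h1,
      ENNReal.toReal_sub_of_le prob_le_one (by simp), ENNReal.toReal_one]
  have hcomplReal : ∀ (t : Fin n) (θ : ℝ),
      (μ (((v t) ⁻¹' Set.Iio θ)ᶜ)).toReal = 1 - (μ ((v t) ⁻¹' Set.Iio θ)).toReal := by
    intro t θ
    rw [prob_compl_eq_one_sub ((hmeas t) measurableSet_Iio),
      ENNReal.toReal_sub_of_le prob_le_one (by simp), ENNReal.toReal_one]
  -- the master backward induction
  have key : ∀ t : ℕ, t ≤ n →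
      Measurable (A t) ∧
      (∀ θ, 0 ≤ A t θ ∧ A t θ ≤ 1) ∧
      (∀ θ, 0 ≤ W t θ ∧ W t θ ≤ 1 - G t θ) ∧
      (∀ θ, G t θ ≤ lam → c * G t θ ≤ A t θ) ∧
      (∀ θ, lam ≤ G t θ → G t θ * Real.log (1 / G t θ) ≤ A t θ) ∧
      (∀ θ, c * W t θ ≤ A t θ) := by
    refine down_ind ?_ ?_
    · -- base case t = n
      refine ⟨?_, ?_, ?_, ?_, ?_, ?_⟩
      · have : A n = fun _ => (0 : ℝ) := funext hAn
        rw [this]; exact measurable_const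
      · intro θ; rw [hAn]; exact ⟨le_rfl, zero_le_one⟩
      · intro θ; rw [hWn, hGn]; norm_num
      · intro θ h; rw [hGn] at h; linarith
      · intro θ _; rw [hGn, hAn]; simp
      · intro θ; rw [hWn, hAn]; simp
    · -- inductive step
      intro t ht IH
      obtain ⟨mA1, bA1, bW1, low1, high1, main1⟩ := IH
      have hAt : ∀ θ : ℝ, A t θ =
          ∫ ω, (if θ < v ⟨t, ht⟩ ω ∧ lam ≤ G (t + 1) (v ⟨t, ht⟩ ω)
                then G (t + 1) (v ⟨t, ht⟩ ω)
                else A (t + 1) (max θ (v ⟨t, ht⟩ ω))) ∂μ :=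
        fun θ => hA ⟨t, ht⟩ θ
      have hWt : ∀ θ : ℝ, W t θ =
          ∫ ω, max (if θ < v ⟨t, ht⟩ ω then G (t + 1) (v ⟨t, ht⟩ ω) else 0)
                   (W (t + 1) (max θ (v ⟨t, ht⟩ ω))) ∂μ :=
        fun θ => hW ⟨t, ht⟩ θ
      have mGt1v : Measurable fun ω => G (t + 1) (v ⟨t, ht⟩ ω) :=
        (hGmeas (t + 1)).comp (hmeas ⟨t, ht⟩)
      have mAI : ∀ θ : ℝ, Measurable (fun ω =>
          (if θ < v ⟨t, ht⟩ ω ∧ lam ≤ G (t + 1) (v ⟨t, ht⟩ ω)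
           then G (t + 1) (v ⟨t, ht⟩ ω)
           else A (t + 1) (max θ (v ⟨t, ht⟩ ω)))) := by
        intro θ
        refine Measurable.ite ?_ mGt1v (mA1.comp (measurable_const.max (hmeas ⟨t, ht⟩)))
        rw [Set.setOf_and]
        exact ((hmeas ⟨t, ht⟩) measurableSet_Ioi).inter (mGt1v measurableSet_Ici)
      have AI0 : ∀ (θ : ℝ) ω, 0 ≤
          (if θ < v ⟨t, ht⟩ ω ∧ lam ≤ G (t + 1) (v ⟨t, ht⟩ ω)
           then G (t + 1) (v ⟨t, ht⟩ ω)
           else A (t + 1) (max θ (v ⟨t, ht⟩ ω))) := by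
        intro θ ω; split_ifs
        · exact hG0 _ _
        · exact (bA1 _).1
      have AI1 : ∀ (θ : ℝ) ω,
          (if θ < v ⟨t, ht⟩ ω ∧ lam ≤ G (t + 1) (v ⟨t, ht⟩ ω)
           then G (t + 1) (v ⟨t, ht⟩ ω)
           else A (t + 1) (max θ (v ⟨t, ht⟩ ω))) ≤ 1 := by
        intro θ ω; split_ifs
        · exact hG1 _ _
        · exact (bA1 _).2
      have intAI : ∀ θ : ℝ, Integrable (fun ω =>
          (if θ < v ⟨t, ht⟩ ω ∧ lam ≤ G (t + 1) (v ⟨t, ht⟩ ω)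
           then G (t + 1) (v ⟨t, ht⟩ ω)
           else A (t + 1) (max θ (v ⟨t, ht⟩ ω)))) μ :=
        fun θ => integrable_of_bounds μ (mAI θ) (AI0 θ) (AI1 θ)
      have WI0 : ∀ (θ : ℝ) ω, 0 ≤
          max (if θ < v ⟨t, ht⟩ ω then G (t + 1) (v ⟨t, ht⟩ ω) else 0)
              (W (t + 1) (max θ (v ⟨t, ht⟩ ω))) :=
        fun θ ω => le_trans (by split_ifs; exacts [hG0 _ _, le_rfl]) (le_max_left _ _)
      -- measurability of A t
      have mAt : Measurable (A t) := by
        have hfun : A t = fun θ => ∫ ω,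
            (if θ < v ⟨t, ht⟩ ω ∧ lam ≤ G (t + 1) (v ⟨t, ht⟩ ω)
             then G (t + 1) (v ⟨t, ht⟩ ω)
             else A (t + 1) (max θ (v ⟨t, ht⟩ ω))) ∂μ := funext hAt
        rw [hfun]
        have jm : Measurable (fun q : ℝ × Ω =>
            (if q.1 < v ⟨t, ht⟩ q.2 ∧ lam ≤ G (t + 1) (v ⟨t, ht⟩ q.2)
             then G (t + 1) (v ⟨t, ht⟩ q.2)
             else A (t + 1) (max q.1 (v ⟨t, ht⟩ q.2)))) := by
          refine Measurable.ite ?_ (mGt1v.comp measurable_snd)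
            (mA1.comp (measurable_fst.max ((hmeas ⟨t, ht⟩).comp measurable_snd)))
          rw [Set.setOf_and]
          exact (measurableSet_lt measurable_fst ((hmeas ⟨t, ht⟩).comp measurable_snd)).inter
            ((mGt1v.comp measurable_snd) measurableSet_Ici)
        exact jm.stronglyMeasurable.integral_prod_right'.measurable
      -- A bounds
      have bA : ∀ θ : ℝ, 0 ≤ A t θ ∧ A t θ ≤ 1 := by
        intro θ
        constructor
        · rw [hAt θ]; exact integral_nonneg (AI0 θ)
        · rw [hAt θ]
          calc _ ≤ ∫ _, (1 : ℝ) ∂μ := integral_mono (intAI θ) (integrable_const 1) (AI1 θ)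
          _ = 1 := by simp
      -- W bounds
      have bW : ∀ θ : ℝ, 0 ≤ W t θ ∧ W t θ ≤ 1 - G t θ := by
        intro θ
        constructor
        · rw [hWt θ]; exact integral_nonneg (WI0 θ)
        · rw [hWt θ, hGsplit t ht θ]
          have hs : MeasurableSet ((v ⟨t, ht⟩) ⁻¹' Set.Iio θ) := (hmeas _) measurableSet_Iio
          set B : Ω → ℝ := fun ω => if v ⟨t, ht⟩ ω < θ then 1 - G (t + 1) θ else 1 with hB
          have mB : Measurable B := Measurable.ite ((hmeas _) measurableSet_Iio)
            measurable_const measurable_const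
          have intB : Integrable B μ := by
            refine integrable_of_bounds μ mB (fun ω => ?_) (fun ω => ?_)
            · simp only [hB]; split_ifs
              · linarith [hG1 (t + 1) θ]
              · norm_num
            · simp only [hB]; split_ifs
              · linarith [hG0 (t + 1) θ]
              · norm_num
          have pw : ∀ ω, max (if θ < v ⟨t, ht⟩ ω then G (t + 1) (v ⟨t, ht⟩ ω) else 0)
              (W (t + 1) (max θ (v ⟨t, ht⟩ ω))) ≤ B ω := by
            intro ω
            by_cases hv : v ⟨t, ht⟩ ω < θ
            · simp only [hB, if_pos hv]
              rw [if_neg (by linarith), max_eq_left hv.le]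
              exact max_le (by linarith [hG1 (t + 1) θ]) (by
                calc W (t + 1) θ ≤ 1 - G (t + 1) θ := (bW1 θ).2
                _ ≤ 1 - G (t + 1) θ := le_rfl)
            · simp only [hB, if_neg hv]
              refine max_le (by split_ifs; exacts [hG1 _ _, zero_le_one]) ?_
              calc W (t + 1) (max θ (v ⟨t, ht⟩ ω))
                  ≤ 1 - G (t + 1) (max θ (v ⟨t, ht⟩ ω)) := (bW1 _).2
                _ ≤ 1 := by linarith [hG0 (t + 1) (max θ (v ⟨t, ht⟩ ω))]
          have hintB : ∫ ω, B ω ∂μ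
              = (μ ((v ⟨t, ht⟩) ⁻¹' Set.Iio θ)).toReal * (1 - G (t + 1) θ)
                + (1 - (μ ((v ⟨t, ht⟩) ⁻¹' Set.Iio θ)).toReal) := by
            rw [← integral_add_compl hs intB]
            congr 1
            · rw [setIntegral_congr_fun hs (g := fun _ => 1 - G (t + 1) θ)
                (fun ω hω => by simp only [hB]; rw [if_pos (show v ⟨t, ht⟩ ω < θ from hω)]),
                setIntegral_const, smul_eq_mul, Measure.real]
            · rw [setIntegral_congr_fun hs.compl (g := fun _ => (1 : ℝ))
                (fun ω hω => by
                  simp only [hB]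
                  rw [if_neg (show ¬ v ⟨t, ht⟩ ω < θ from hω)]),
                setIntegral_const, smul_eq_mul, mul_one, Measure.real, hcomplReal]
          calc ∫ ω, max (if θ < v ⟨t, ht⟩ ω then G (t + 1) (v ⟨t, ht⟩ ω) else 0)
                  (W (t + 1) (max θ (v ⟨t, ht⟩ ω))) ∂μ
              ≤ ∫ ω, B ω ∂μ := integral_mono_of_nonneg
                (Filter.Eventually.of_forall (WI0 θ)) intB (Filter.Eventually.of_forall pw)
            _ = _ := by rw [hintB]; ring
      -- splitting the recursion for A
      have hsplitA : ∀ θ : ℝ, A t θ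
          = (μ ((v ⟨t, ht⟩) ⁻¹' Set.Iio θ)).toReal * A (t + 1) θ
            + ∫ ω in ((v ⟨t, ht⟩) ⁻¹' Set.Iio θ)ᶜ,
                (if θ < v ⟨t, ht⟩ ω ∧ lam ≤ G (t + 1) (v ⟨t, ht⟩ ω)
                 then G (t + 1) (v ⟨t, ht⟩ ω)
                 else A (t + 1) (max θ (v ⟨t, ht⟩ ω))) ∂μ := by
        intro θ
        have hs : MeasurableSet ((v ⟨t, ht⟩) ⁻¹' Set.Iio θ) := (hmeas _) measurableSet_Iio
        rw [hAt θ, ← integral_add_compl hs (intAI θ)]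
        congr 1
        rw [setIntegral_congr_fun hs (g := fun _ => A (t + 1) θ) (fun ω hω => by
            have hv : v ⟨t, ht⟩ ω < θ := hω
            rw [if_neg (fun h => absurd h.1 (not_lt.mpr hv.le)), max_eq_left hv.le]),
          setIntegral_const, smul_eq_mul, Measure.real]
      have hcompl_nonneg : ∀ θ : ℝ, 0 ≤ ∫ ω in ((v ⟨t, ht⟩) ⁻¹' Set.Iio θ)ᶜ,
          (if θ < v ⟨t, ht⟩ ω ∧ lam ≤ G (t + 1) (v ⟨t, ht⟩ ω)
           then G (t + 1) (v ⟨t, ht⟩ ω)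
           else A (t + 1) (max θ (v ⟨t, ht⟩ ω))) ∂μ :=
        fun θ => setIntegral_nonneg ((hmeas _) measurableSet_Iio).compl (fun ω _ => AI0 θ ω)
      have hcompl_ge : ∀ θ : ℝ, lam < G (t + 1) θ →
          (1 - (μ ((v ⟨t, ht⟩) ⁻¹' Set.Iio θ)).toReal) * G (t + 1) θ
            ≤ ∫ ω in ((v ⟨t, ht⟩) ⁻¹' Set.Iio θ)ᶜ,
                (if θ < v ⟨t, ht⟩ ω ∧ lam ≤ G (t + 1) (v ⟨t, ht⟩ ω)
                 then G (t + 1) (v ⟨t, ht⟩ ω)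
                 else A (t + 1) (max θ (v ⟨t, ht⟩ ω))) ∂μ := by
        intro θ hgt
        have hae : (((v ⟨t, ht⟩) ⁻¹' Set.Iio θ)ᶜ : Set Ω)
            =ᵐ[μ] ((v ⟨t, ht⟩) ⁻¹' Set.Ioi θ) := by
          rw [MeasureTheory.ae_eq_set]
          constructor
          · refine measure_mono_null (fun ω hω => ?_) (hatomless ⟨t, ht⟩ θ)
            obtain ⟨h1, h2⟩ := hω
            have hv1 : ¬ v ⟨t, ht⟩ ω < θ := h1
            have hv2 : ¬ θ < v ⟨t, ht⟩ ω := h2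
            exact le_antisymm (not_lt.mp hv2) (not_lt.mp hv1)
          · refine measure_mono_null (fun ω hω => ?_) (hatomless ⟨t, ht⟩ θ)
            obtain ⟨h1, h2⟩ := hω
            have hv1 : θ < v ⟨t, ht⟩ ω := h1
            have hv2 : v ⟨t, ht⟩ ω < θ := Set.not_notMem.mp h2
            exact (lt_asymm hv1 hv2).elim
        rw [setIntegral_congr_set hae]
        have hmono : ∫ ω in ((v ⟨t, ht⟩) ⁻¹' Set.Ioi θ), G (t + 1) θ ∂μ
            ≤ ∫ ω in ((v ⟨t, ht⟩) ⁻¹' Set.Ioi θ),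
                (if θ < v ⟨t, ht⟩ ω ∧ lam ≤ G (t + 1) (v ⟨t, ht⟩ ω)
                 then G (t + 1) (v ⟨t, ht⟩ ω)
                 else A (t + 1) (max θ (v ⟨t, ht⟩ ω))) ∂μ := by
          refine setIntegral_mono_on (hf := (integrable_const _).integrableOn)
            (hg := (intAI θ).integrableOn) ((hmeas _) measurableSet_Ioi) (fun ω hω => ?_)
          have hv : θ < v ⟨t, ht⟩ ω := hω
          have hm : G (t + 1) θ ≤ G (t + 1) (v ⟨t, ht⟩ ω) := hGmono (t + 1) hv.le
          rw [if_pos ⟨hv, le_trans hgt.le hm⟩]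
          exact hm
        calc (1 - (μ ((v ⟨t, ht⟩) ⁻¹' Set.Iio θ)).toReal) * G (t + 1) θ
            = ∫ _ω in ((v ⟨t, ht⟩) ⁻¹' Set.Ioi θ), G (t + 1) θ ∂μ := by
              rw [setIntegral_const, smul_eq_mul, Measure.real, hFcompl]
          _ ≤ _ := hmono
      -- the "low" invariant
      have low : ∀ θ : ℝ, G t θ ≤ lam → c * G t θ ≤ A t θ := by
        intro θ hgl
        have hgeq : G t θ = (μ ((v ⟨t, ht⟩) ⁻¹' Set.Iio θ)).toReal * G (t + 1) θ :=
          hGsplit t ht θ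
        have hF0 : (0 : ℝ) ≤ (μ ((v ⟨t, ht⟩) ⁻¹' Set.Iio θ)).toReal := ENNReal.toReal_nonneg
        have hF1 : (μ ((v ⟨t, ht⟩) ⁻¹' Set.Iio θ)).toReal ≤ 1 := by
          simpa using ENNReal.toReal_mono (by simp) (prob_le_one (μ := μ))
        by_cases hle : G (t + 1) θ ≤ lam
        · have h1 := mul_le_mul_of_nonneg_left (low1 θ hle) hF0
          rw [hsplitA θ, hgeq]
          have hring : c * ((μ ((v ⟨t, ht⟩) ⁻¹' Set.Iio θ)).toReal * G (t + 1) θ)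
              = (μ ((v ⟨t, ht⟩) ⁻¹' Set.Iio θ)).toReal * (c * G (t + 1) θ) := by ring
          rw [hring]
          linarith [hcompl_nonneg θ, h1]
        · push_neg at hle
          have hg'0 : 0 < G (t + 1) θ := lt_trans hl0 hle
          have hFg : (μ ((v ⟨t, ht⟩) ⁻¹' Set.Iio θ)).toReal * G (t + 1) θ ≤ lam := by
            rw [← hgeq]; exact hgl
          rw [hsplitA θ, hgeq]
          exact step_low hl0 hcdef hF0 hF1 hg'0 hFg hle (high1 θ hle.le) (hcompl_ge θ hle)
      -- the "high" invariant
      have high : ∀ θ : ℝ, lam ≤ G t θ → G t θ * Real.log (1 / G t θ) ≤ A t θ := by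
        intro θ hgl
        have hgeq : G t θ = (μ ((v ⟨t, ht⟩) ⁻¹' Set.Iio θ)).toReal * G (t + 1) θ :=
          hGsplit t ht θ
        have hF0 : (0 : ℝ) ≤ (μ ((v ⟨t, ht⟩) ⁻¹' Set.Iio θ)).toReal := ENNReal.toReal_nonneg
        have hF1 : (μ ((v ⟨t, ht⟩) ⁻¹' Set.Iio θ)).toReal ≤ 1 := by
          simpa using ENNReal.toReal_mono (by simp) (prob_le_one (μ := μ))
        have hg'0 : (0 : ℝ) ≤ G (t + 1) θ := hG0 _ _
        have hg'1 : G (t + 1) θ ≤ 1 := hG1 _ _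
        by_cases hle : G (t + 1) θ ≤ lam
        · -- degenerate case: everything equals lam and F = 1
          have h1 : G t θ ≤ G (t + 1) θ := by nlinarith [hgeq]
          have hgeq2 : G t θ = lam := le_antisymm (le_trans h1 hle) hgl
          have hg'eq : G (t + 1) θ = lam := le_antisymm hle (le_trans hgl h1)
          have hFeq : (μ ((v ⟨t, ht⟩) ⁻¹' Set.Iio θ)).toReal = 1 := by
            rw [hgeq2, hg'eq] at hgeq
            have h2 : (μ ((v ⟨t, ht⟩) ⁻¹' Set.Iio θ)).toReal * lam = 1 * lam := by
              linarith
            exact mul_right_cancel₀ (ne_of_gt hl0) h2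
          have h2 := low1 θ hle
          have h3 : A (t + 1) θ ≤ A t θ := by
            rw [hsplitA θ, hFeq]
            linarith [hcompl_nonneg θ]
          rw [hgeq2, ← hcdef]
          rw [hg'eq] at h2
          linarith
        · push_neg at hle
          have hg'pos : 0 < G (t + 1) θ := lt_trans hl0 hle
          have hFpos : 0 < (μ ((v ⟨t, ht⟩) ⁻¹' Set.Iio θ)).toReal := by
            have h4 : (μ ((v ⟨t, ht⟩) ⁻¹' Set.Iio θ)).toReal * G (t + 1) θ
                ≤ (μ ((v ⟨t, ht⟩) ⁻¹' Set.Iio θ)).toReal * 1 :=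
              mul_le_mul_of_nonneg_left hg'1 hF0
            rw [mul_one] at h4
            linarith [hgeq]
          rw [hsplitA θ, hgeq]
          exact step_high hFpos hF1 hg'pos (high1 θ hle.le) (hcompl_ge θ hle)
      -- the main comparison
      have main : ∀ θ : ℝ, c * W t θ ≤ A t θ := by
        intro θ
        have pw : ∀ ω, c * (max (if θ < v ⟨t, ht⟩ ω then G (t + 1) (v ⟨t, ht⟩ ω) else 0)
              (W (t + 1) (max θ (v ⟨t, ht⟩ ω))))
            ≤ (if θ < v ⟨t, ht⟩ ω ∧ lam ≤ G (t + 1) (v ⟨t, ht⟩ ω)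
               then G (t + 1) (v ⟨t, ht⟩ ω)
               else A (t + 1) (max θ (v ⟨t, ht⟩ ω))) := by
          intro ω
          by_cases hv : θ < v ⟨t, ht⟩ ω
          · by_cases hp : lam ≤ G (t + 1) (v ⟨t, ht⟩ ω)
            · rw [if_pos (show θ < v ⟨t, ht⟩ ω ∧ lam ≤ G (t + 1) (v ⟨t, ht⟩ ω) from ⟨hv, hp⟩),
                if_pos hv, max_eq_right hv.le]
              have hWb := (bW1 (v ⟨t, ht⟩ ω)).2
              have h1 : c * G (t + 1) (v ⟨t, ht⟩ ω) ≤ G (t + 1) (v ⟨t, ht⟩ ω) := by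
                nlinarith [hG0 (t + 1) (v ⟨t, ht⟩ ω)]
              have h2 : c * W (t + 1) (v ⟨t, ht⟩ ω) ≤ G (t + 1) (v ⟨t, ht⟩ ω) := by
                nlinarith [(bW1 (v ⟨t, ht⟩ ω)).1]
              rcases max_cases (G (t + 1) (v ⟨t, ht⟩ ω)) (W (t + 1) (v ⟨t, ht⟩ ω)) with
                ⟨hm, _⟩ | ⟨hm, _⟩ <;> rw [hm]
              · exact h1
              · exact h2
            · rw [if_neg (show ¬(θ < v ⟨t, ht⟩ ω ∧ lam ≤ G (t + 1) (v ⟨t, ht⟩ ω)) from fun h => hp h.2),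
                if_pos hv, max_eq_right hv.le]
              have h1 : c * G (t + 1) (v ⟨t, ht⟩ ω) ≤ A (t + 1) (v ⟨t, ht⟩ ω) :=
                low1 _ (le_of_not_ge hp)
              have h2 : c * W (t + 1) (v ⟨t, ht⟩ ω) ≤ A (t + 1) (v ⟨t, ht⟩ ω) := main1 _
              rcases max_cases (G (t + 1) (v ⟨t, ht⟩ ω)) (W (t + 1) (v ⟨t, ht⟩ ω)) with
                ⟨hm, _⟩ | ⟨hm, _⟩ <;> rw [hm]
              · exact h1
              · exact h2
          · rw [if_neg (show ¬(θ < v ⟨t, ht⟩ ω ∧ lam ≤ G (t + 1) (v ⟨t, ht⟩ ω)) from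
                fun h => hv h.1), if_neg hv, max_eq_left (not_lt.mp hv),
              max_eq_right (bW1 θ).1]
            exact main1 θ
        rw [hWt θ, hAt θ, ← integral_const_mul]
        exact integral_mono_of_nonneg
          (Filter.Eventually.of_forall fun ω => mul_nonneg hc_pos.le (WI0 θ ω))
          (intAI θ) (Filter.Eventually.of_forall pw)
      exact ⟨mAt, bA, bW, low, high, main⟩
  intro θ
  exact (key 0 (by omega)).2.2.2.2.2 θ
end

section
/- For every real α > 0, ((α/2)·e^{−α} + e^{−α/2} − e^{−α}) ≤ 0.57 · (1 − e^{−α/2} + e^{−α}). In words: the limiting ratio between the winning probability of a single-threshold algorithm and that of the best order-aware algorithm in the hard instance of Claim 4.3 is at most 0.57 for every choice of the threshold parameter α, so no single-threshold algorithm guarantees an order competitive ratio better than 0.57 for the max-probability objective. -/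
lemma log_pade (u : ℝ) (hu : 1 ≤ u) :
    Real.log u ≤ (u - 1) * (u + 5) / (2 * (2 * u + 1)) := by
  set z : ℝ := (u - 1) * (u + 5) / (2 * (2 * u + 1)) with hz
  have hden : (0:ℝ) < 2 * (2 * u + 1) := by nlinarith
  have hz0 : 0 ≤ z := by
    apply div_nonneg _ hden.le
    nlinarith
  have hexp : 1 + z + z ^ 2 / 2 + z ^ 3 / 6 + z ^ 4 / 24 ≤ Real.exp z := by
    have := Real.sum_le_exp_of_nonneg hz0 5
    simpa [Finset.sum_range_succ, Nat.factorial] using this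
  have hu_le : u ≤ Real.exp z := by
    refine le_trans ?_ hexp
    rw [← sub_nonneg]
    have heq : (1 + z + z ^ 2 / 2 + z ^ 3 / 6 + z ^ 4 / 24) - u =
        ((u - 1) ^ 4 * (u ^ 4 + 36 * u ^ 3 + 606 * u ^ 2 - 28 * u + 249)) /
          (24 * (2 * (2 * u + 1)) ^ 4) := by
      rw [hz]; field_simp; ring
    rw [heq]
    apply div_nonneg _ (by positivity)
    have h4 : (0:ℝ) ≤ (u - 1) ^ 4 := by positivity
    have h5 : (0:ℝ) ≤ u ^ 4 + 36 * u ^ 3 + 606 * u ^ 2 - 28 * u + 249 := by nlinarith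
    exact mul_nonneg h4 h5
  calc Real.log u ≤ Real.log (Real.exp z) :=
        Real.log_le_log (by linarith) hu_le
    _ = z := Real.log_exp z

/-- For every real `α > 0`,
`(α/2)·e^{−α} + e^{−α/2} − e^{−α} ≤ 0.57 · (1 − e^{−α/2} + e^{−α})`:
the limiting ratio between the winning probability of a single-threshold
algorithm and that of the best order-aware algorithm in the hard instance of
Claim 4.3 is at most 0.57 for every threshold parameter `α`. -/
theorem single_threshold_ratio_le (α : ℝ) (hα : 0 < α) :
    (α / 2) * Real.exp (-α) + Real.exp (-α / 2) - Real.exp (-α)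
      ≤ 0.57 * (1 - Real.exp (-α / 2) + Real.exp (-α)) := by
  set v : ℝ := Real.exp (α / 4) with hvdef
  have hv1 : 1 < v := by
    rw [hvdef]
    exact Real.one_lt_exp_iff.mpr (by linarith)
  have hv0 : (0:ℝ) < v := by linarith
  have ha : Real.exp (-α / 2) = (v ^ 2)⁻¹ := by
    rw [hvdef, ← Real.exp_nat_mul, ← Real.exp_neg]
    norm_num
    ring_nf
  have hb : Real.exp (-α) = (v ^ 4)⁻¹ := by
    rw [hvdef, ← Real.exp_nat_mul, ← Real.exp_neg]
    norm_num
    ring_nf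
  have hlog : α / 4 = Real.log v := by rw [hvdef, Real.log_exp]
  have hpade : α / 4 ≤ (v - 1) * (v + 5) / (2 * (2 * v + 1)) := by
    rw [hlog]; exact log_pade v hv1.le
  rw [ha, hb]
  have hb0 : (0:ℝ) < (v ^ 4)⁻¹ := by positivity
  have step1 : (α / 2) * (v ^ 4)⁻¹ ≤
      2 * ((v - 1) * (v + 5) / (2 * (2 * v + 1))) * (v ^ 4)⁻¹ := by
    apply mul_le_mul_of_nonneg_right _ hb0.le
    linarith
  have step2 : 2 * ((v - 1) * (v + 5) / (2 * (2 * v + 1))) * (v ^ 4)⁻¹ + (v ^ 2)⁻¹ - (v ^ 4)⁻¹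
      ≤ 0.57 * (1 - (v ^ 2)⁻¹ + (v ^ 4)⁻¹) := by
    rw [← sub_nonneg]
    have hden : (0:ℝ) < 2 * (2 * v + 1) := by nlinarith
    have heq : 0.57 * (1 - (v ^ 2)⁻¹ + (v ^ 4)⁻¹) -
        (2 * ((v - 1) * (v + 5) / (2 * (2 * v + 1))) * (v ^ 4)⁻¹ + (v ^ 2)⁻¹ - (v ^ 4)⁻¹) =
        (0.57 * (v ^ 4 - v ^ 2 + 1) * (2 * v + 1) - (v ^ 2 - 1) * (2 * v + 1)
          - (v - 1) * (v + 5)) / (v ^ 4 * (2 * v + 1)) := by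
      field_simp
      ring
    rw [heq]
    apply div_nonneg _ (by positivity)
    nlinarith [sq_nonneg (v - 1.361), sq_nonneg (v * v - 2 * v), sq_nonneg (v - 1), mul_pos hv0 hv0, sq_nonneg (v * (v - 1.361)), sq_nonneg (v * v - 1.852 * v)]
  linarith
end
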